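/- arXiv:2103.04455 — 15 statements merged into one kernel-verified Lean document; each statement's English description precedes it below -/
import Mathlib

section
/- A nonempty set S ⊆ S_Φ is s-convex if and only if there exists a pointed convex cone K ⊆ ℝⁿ with K ≠ {0} such that S = K ∩ S_Φ. -/
open Set
open scoped RealInnerProductSpace

/-- `rho Φ x = x / Φ x` (equal to `0` when `Φ x = 0`, in particular `rho Φ 0 = 0`). -/
noncomputable def rho {n : ℕ} (Φ : EuclideanSpace ℝ (Fin n) → ℝ)
    (x : EuclideanSpace ℝ (Fin n)) : EuclideanSpace ℝ (Fin n) := (Φ x)⁻¹ • x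

/-- The `Φ`-sphere `S_Φ = {x | Φ x = 1}`. -/
def sphereSet {n : ℕ} (Φ : EuclideanSpace ℝ (Fin n) → ℝ) : Set (EuclideanSpace ℝ (Fin n)) :=
  {x | Φ x = 1}

/-- `S` is s-convex: `ρ(λx + (1-λ)y) ∈ S` for all `x, y ∈ S`, `λ ∈ [0,1]`. -/
def SConvex {n : ℕ} (Φ : EuclideanSpace ℝ (Fin n) → ℝ)
    (S : Set (EuclideanSpace ℝ (Fin n))) : Prop :=
  ∀ x ∈ S, ∀ y ∈ S, ∀ l : ℝ, l ∈ Set.Icc (0 : ℝ) 1 → rho Φ (l • x + (1 - l) • y) ∈ S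

theorem stmt2 {n : ℕ} (hn : 2 ≤ n) (Φ : EuclideanSpace ℝ (Fin n) → ℝ)
    (hc : Continuous Φ) (hnn : ∀ x, 0 ≤ Φ x)
    (hhom : ∀ (t : ℝ), 0 ≤ t → ∀ x, Φ (t • x) = t * Φ x)
    (hzero : ∀ x, Φ x = 0 ↔ x = 0)
    (S : Set (EuclideanSpace ℝ (Fin n))) (hne : S.Nonempty) (hsub : S ⊆ sphereSet Φ) :
    SConvex Φ S ↔
      ∃ K : Set (EuclideanSpace ℝ (Fin n)),
        Convex ℝ K ∧ (∀ c : ℝ, 0 ≤ c → ∀ y ∈ K, c • y ∈ K) ∧ K ≠ {0} ∧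
        K ∩ (-K) = {0} ∧ S = K ∩ sphereSet Φ := by
  have hPhi0 : Φ 0 = 0 := (hzero 0).mpr rfl
  have hSne : ∀ x ∈ S, x ≠ 0 := by
    intro x hx h
    have h1 : Φ x = 1 := hsub hx
    rw [h, hPhi0] at h1
    norm_num at h1
  constructor
  · intro hS
    have key : ∀ x ∈ S, ∀ y ∈ S, ∀ l : ℝ, 0 ≤ l → l ≤ 1 →
        l • x + (1 - l) • y ≠ 0 := by
      intro x hx y hy l hl0 hl1 h0
      have hmem := hS x hx y hy l ⟨hl0, hl1⟩
      rw [h0] at hmem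
      have h1 : Φ (rho Φ 0) = 1 := hsub hmem
      simp [rho, hPhi0] at h1
    set K : Set (EuclideanSpace ℝ (Fin n)) :=
      {z | ∃ c : ℝ, 0 ≤ c ∧ ∃ x ∈ S, z = c • x} with hKdef
    have memK : ∀ x ∈ S, ∀ y ∈ S, ∀ α β : ℝ, 0 ≤ α → 0 ≤ β → 0 < α + β →
        α • x + β • y ∈ K := by
      intro x hx y hy α β hα hβ ht
      have htne : α + β ≠ 0 := ht.ne'
      have hl0 : 0 ≤ α / (α + β) := div_nonneg hα ht.le
      have hl1 : α / (α + β) ≤ 1 := by rw [div_le_one ht]; linarith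
      set w := (α / (α + β)) • x + (1 - α / (α + β)) • y with hw
      have hwS : rho Φ w ∈ S := hS x hx y hy _ ⟨hl0, hl1⟩
      have hwne : w ≠ 0 := key x hx y hy _ hl0 hl1
      have hΦw : Φ w ≠ 0 := fun h => hwne ((hzero w).mp h)
      have hΦwpos : 0 < Φ w := lt_of_le_of_ne (hnn w) (Ne.symm hΦw)
      refine ⟨(α + β) * Φ w, by positivity, rho Φ w, hwS, ?_⟩
      rw [rho, smul_smul, mul_assoc, mul_inv_cancel₀ hΦw, mul_one, hw, smul_add,
        smul_smul, smul_smul]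
      have e1 : (α + β) * (α / (α + β)) = α := by field_simp
      have e2 : (α + β) * (1 - α / (α + β)) = β := by
        field_simp; ring
      rw [e1, e2]
    obtain ⟨x0, hx0⟩ := hne
    have hx0K : x0 ∈ K := ⟨1, zero_le_one, x0, hx0, (one_smul ℝ x0).symm⟩
    have h0K : (0 : EuclideanSpace ℝ (Fin n)) ∈ K :=
      ⟨0, le_refl 0, x0, hx0, (zero_smul ℝ x0).symm⟩
    refine ⟨K, ?_, ?_, ?_, ?_, ?_⟩
    · rintro a ⟨c, hc', x, hx, rfl⟩ b ⟨d, hd', y, hy, rfl⟩ l m hl hm hlm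
      rw [smul_smul, smul_smul]
      rcases eq_or_lt_of_le (by positivity : (0:ℝ) ≤ l * c + m * d) with h | h
      · have hlc : l * c = 0 := by nlinarith [mul_nonneg hl hc', mul_nonneg hm hd']
        have hmd : m * d = 0 := by nlinarith [mul_nonneg hl hc', mul_nonneg hm hd']
        rw [hlc, hmd]
        simpa using h0K
      · exact memK x hx y hy _ _ (by positivity) (by positivity) h
    · rintro c hc' z ⟨d, hd', x, hx, rfl⟩
      exact ⟨c * d, by positivity, x, hx, (smul_smul c d x)⟩
    · intro h
      have := h ▸ hx0K
      exact hSne x0 hx0 (by simpa using this)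
    · ext z
      simp only [Set.mem_inter_iff, Set.mem_neg, Set.mem_singleton_iff]
      constructor
      · rintro ⟨⟨c, hc', x, hx, rfl⟩, hneg⟩
        obtain ⟨d, hd', y, hy, heq⟩ := hneg
        by_contra hz
        have hcne : c ≠ 0 := by
          intro h; apply hz; rw [h, zero_smul]
        have hdne : d ≠ 0 := by
          intro h
          apply hz
          rw [h, zero_smul] at heq
          rw [neg_eq_zero] at heq
          exact heq
        have hcpos : 0 < c := lt_of_le_of_ne hc' (Ne.symm hcne)
        have hdpos : 0 < d := lt_of_le_of_ne hd' (Ne.symm hdne)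
        have hsum : c • x + d • y = 0 := by
          rw [← heq]; abel
        have ht : (0:ℝ) < c + d := by linarith
        have hzero' : (c / (c + d)) • x + (1 - c / (c + d)) • y = 0 := by
          have e2 : 1 - c / (c + d) = d / (c + d) := by field_simp; ring
          rw [e2, div_eq_inv_mul, div_eq_inv_mul, ← smul_smul, ← smul_smul,
            ← smul_add, hsum, smul_zero]
        exact key x hx y hy _ (div_nonneg hc' ht.le) (by rw [div_le_one ht]; linarith)
          hzero'
      · rintro rfl
        exact ⟨h0K, by simpa using h0K⟩
    · ext z
      simp only [Set.mem_inter_iff]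
      constructor
      · intro hz
        exact ⟨⟨1, zero_le_one, z, hz, (one_smul ℝ z).symm⟩, hsub hz⟩
      · rintro ⟨⟨c, hc', x, hx, rfl⟩, hsp⟩
        have h1 : Φ (c • x) = c * Φ x := hhom c hc' x
        have h2 : Φ x = 1 := hsub hx
        have : c = 1 := by
          have := hsp
          simp only [sphereSet, Set.mem_setOf_eq] at this
          rw [h1, h2, mul_one] at this
          exact this
        rw [this, one_smul]
        exact hx
  · rintro ⟨K, hconv, hcone, -, hpt, rfl⟩
    rintro x ⟨hxK, hxS⟩ y ⟨hyK, hyS⟩ l ⟨hl0, hl1⟩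
    have hxne : x ≠ 0 := hSne x ⟨hxK, hxS⟩
    have hyne : y ≠ 0 := hSne y ⟨hyK, hyS⟩
    set z := l • x + (1 - l) • y with hz
    have hzK : z ∈ K := hconv hxK hyK hl0 (by linarith) (by ring)
    have hzne : z ≠ 0 := by
      intro h0
      have hlx : l • x ∈ K := hcone l hl0 x hxK
      have hlyK : (1 - l) • y ∈ K := hcone (1 - l) (by linarith) y hyK
      have hmem : l • x ∈ K ∩ (-K) := by
        refine ⟨hlx, ?_⟩
        rw [Set.mem_neg]
        have h0' : l • x + (1 - l) • y = 0 := h0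
        rw [neg_eq_of_add_eq_zero_right h0']
        exact hlyK
      rw [hpt, Set.mem_singleton_iff] at hmem
      rcases smul_eq_zero.mp hmem with h | h
      · apply hyne
        have h0' : l • x + (1 - l) • y = 0 := hz ▸ h0
        rw [h] at h0'
        simpa using h0'
      · exact hxne h
    have hΦz : Φ z ≠ 0 := fun h => hzne ((hzero z).mp h)
    have hΦzpos : 0 < Φ z := lt_of_le_of_ne (hnn z) (Ne.symm hΦz)
    constructor
    · exact hcone (Φ z)⁻¹ (by positivity) z hzK
    · show Φ (rho Φ z) = 1
      rw [rho, hhom (Φ z)⁻¹ (by positivity) z, inv_mul_cancel₀ hΦz]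
end

section
/- A nonempty set S ⊆ S_Φ is s-convex if and only if there exists a nonempty convex set C ⊆ ℝⁿ \ {0} such that S = ρ(C). -/
open Set
open scoped RealInnerProductSpace

lemma combo_smul {n : ℕ} (p q : ℝ) (hm : p + q ≠ 0) (x y : EuclideanSpace ℝ (Fin n)) :
    p • x + q • y = (p + q) • ((p / (p + q)) • x + (q / (p + q)) • y) := by
  rw [smul_add, smul_smul, smul_smul]
  congr 2 <;> field_simp

lemma rho_smul_pos {n : ℕ} (Φ : EuclideanSpace ℝ (Fin n) → ℝ)
    (hhom : ∀ (t : ℝ), 0 ≤ t → ∀ x, Φ (t • x) = t * Φ x)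
    {m : ℝ} (hm : 0 < m) (v : EuclideanSpace ℝ (Fin n)) :
    rho Φ (m • v) = rho Φ v := by
  unfold rho
  rw [hhom m hm.le, smul_smul]
  congr 1
  rw [mul_inv, mul_comm, ← mul_assoc, mul_inv_cancel₀ hm.ne', one_mul]

theorem stmt3 {n : ℕ} (hn : 2 ≤ n) (Φ : EuclideanSpace ℝ (Fin n) → ℝ)
    (hc : Continuous Φ) (hnn : ∀ x, 0 ≤ Φ x)
    (hhom : ∀ (t : ℝ), 0 ≤ t → ∀ x, Φ (t • x) = t * Φ x)
    (hzero : ∀ x, Φ x = 0 ↔ x = 0)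
    (S : Set (EuclideanSpace ℝ (Fin n))) (hne : S.Nonempty) (hsub : S ⊆ sphereSet Φ) :
    SConvex Φ S ↔
      ∃ C : Set (EuclideanSpace ℝ (Fin n)),
        C.Nonempty ∧ Convex ℝ C ∧ (0 : EuclideanSpace ℝ (Fin n)) ∉ C ∧ S = rho Φ '' C := by
  have hΦ0 : Φ 0 = 0 := (hzero 0).mpr rfl
  have h0S : (0 : EuclideanSpace ℝ (Fin n)) ∉ S := by
    intro h
    have := hsub h
    simp only [sphereSet, mem_setOf_eq, hΦ0] at this
    norm_num at this
  have hrho_id : ∀ x ∈ S, rho Φ x = x := by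
    intro x hx
    have h1 : Φ x = 1 := hsub hx
    simp [rho, h1]
  constructor
  · intro hS
    refine ⟨{z | 0 < Φ z ∧ rho Φ z ∈ S}, ?_, ?_, ?_, ?_⟩
    · obtain ⟨x, hx⟩ := hne
      refine ⟨x, ?_, ?_⟩
      · rw [hsub hx]; norm_num
      · rw [hrho_id x hx]; exact hx
    · rintro z ⟨hz, hzS⟩ w ⟨hw, hwS⟩ a b ha hb hab
      have hz' : z = (Φ z) • rho Φ z := by
        rw [rho, smul_smul, mul_inv_cancel₀ hz.ne', one_smul]
      have hw' : w = (Φ w) • rho Φ w := by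
        rw [rho, smul_smul, mul_inv_cancel₀ hw.ne', one_smul]
      set p := a * Φ z with hp
      set q := b * Φ w with hq
      have hp0 : 0 ≤ p := mul_nonneg ha hz.le
      have hq0 : 0 ≤ q := mul_nonneg hb hw.le
      have hm : 0 < p + q := by
        rcases lt_or_eq_of_le ha with ha' | ha'
        · have : 0 < p := mul_pos ha' hz
          linarith
        · have hb' : 0 < b := by linarith
          have : 0 < q := mul_pos hb' hw
          linarith
      have hcombo : a • z + b • w
          = (p + q) • ((p / (p + q)) • rho Φ z + (q / (p + q)) • rho Φ w) := by
        calc a • z + b • w = p • rho Φ z + q • rho Φ w := by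
              rw [hp, hq, ← smul_smul, ← smul_smul, ← hz', ← hw']
          _ = _ := combo_smul p q hm.ne' _ _
      have hl : p / (p + q) ∈ Set.Icc (0:ℝ) 1 := by
        constructor
        · positivity
        · rw [div_le_one hm]; linarith
      have hl' : 1 - p / (p + q) = q / (p + q) := by
        field_simp
        ring
      have hmem : rho Φ ((p / (p + q)) • rho Φ z + (q / (p + q)) • rho Φ w) ∈ S := by
        have := hS _ hzS _ hwS _ hl
        rwa [hl'] at this
      have hrho : rho Φ (a • z + b • w)
          = rho Φ ((p / (p + q)) • rho Φ z + (q / (p + q)) • rho Φ w) := by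
        rw [hcombo, rho_smul_pos Φ hhom hm]
      have hne0 : a • z + b • w ≠ 0 := by
        intro h0
        have hu : (p / (p + q)) • rho Φ z + (q / (p + q)) • rho Φ w = 0 := by
          have := hcombo
          rw [h0] at this
          have := (smul_eq_zero.mp this.symm).resolve_left hm.ne'
          exact this
        rw [hu] at hmem
        have : rho Φ 0 = 0 := by simp [rho, hΦ0]
        rw [this] at hmem
        exact h0S hmem
      refine ⟨?_, ?_⟩
      · exact lt_of_le_of_ne (hnn _) (fun h => hne0 ((hzero _).mp h.symm))
      · rw [hrho]; exact hmem
    · simp [hΦ0]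
    · ext x
      constructor
      · intro hx
        exact ⟨x, ⟨by rw [hsub hx]; norm_num, by rw [hrho_id x hx]; exact hx⟩, hrho_id x hx⟩
      · rintro ⟨z, ⟨_, hzS⟩, rfl⟩
        exact hzS
  · rintro ⟨C, hCne, hCc, hC0, rfl⟩
    intro x hx y hy l hl
    obtain ⟨a, haC, rfl⟩ := hx
    obtain ⟨b, hbC, rfl⟩ := hy
    have haz : a ≠ 0 := fun h => hC0 (h ▸ haC)
    have hbz : b ≠ 0 := fun h => hC0 (h ▸ hbC)
    have hΦa : 0 < Φ a := lt_of_le_of_ne (hnn a) (fun h => haz ((hzero a).mp h.symm))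
    have hΦb : 0 < Φ b := lt_of_le_of_ne (hnn b) (fun h => hbz ((hzero b).mp h.symm))
    set p := l * (Φ a)⁻¹ with hp
    set q := (1 - l) * (Φ b)⁻¹ with hq
    have hp0 : 0 ≤ p := mul_nonneg hl.1 (inv_nonneg.mpr hΦa.le)
    have hq0 : 0 ≤ q := mul_nonneg (by linarith [hl.2]) (inv_nonneg.mpr hΦb.le)
    have hm : 0 < p + q := by
      rcases lt_or_eq_of_le hl.1 with h | h
      · have : 0 < p := mul_pos h (inv_pos.mpr hΦa)
        linarith
      · have : 0 < q := mul_pos (by linarith) (inv_pos.mpr hΦb)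
        linarith
    have hcombo : l • rho Φ a + (1 - l) • rho Φ b
        = (p + q) • ((p / (p + q)) • a + (q / (p + q)) • b) := by
      calc l • rho Φ a + (1 - l) • rho Φ b = p • a + q • b := by
            rw [rho, rho, smul_smul, smul_smul]
        _ = _ := combo_smul p q hm.ne' _ _
    have hcC : (p / (p + q)) • a + (q / (p + q)) • b ∈ C := by
      apply hCc haC hbC (by positivity) (by positivity)
      field_simp
    rw [hcombo, rho_smul_pos Φ hhom hm]
    exact ⟨_, hcC, rfl⟩
end

section
/- A nonempty set S ⊆ S_Φ is s-convex if and only if S = ρ(conv S), where conv S is the convex hull of S in ℝⁿ. -/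
open Set
open scoped RealInnerProductSpace

theorem stmt4 {n : ℕ} (hn : 2 ≤ n) (Φ : EuclideanSpace ℝ (Fin n) → ℝ)
    (hc : Continuous Φ) (hnn : ∀ x, 0 ≤ Φ x)
    (hhom : ∀ (t : ℝ), 0 ≤ t → ∀ x, Φ (t • x) = t * Φ x)
    (hzero : ∀ x, Φ x = 0 ↔ x = 0)
    (S : Set (EuclideanSpace ℝ (Fin n))) (hne : S.Nonempty) (hsub : S ⊆ sphereSet Φ) :
    SConvex Φ S ↔ S = rho Φ '' (convexHull ℝ S) := by
  -- basic facts
  have hfix : ∀ s ∈ S, rho Φ s = s := by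
    intro s hs
    have h1 : Φ s = 1 := hsub hs
    simp [rho, h1]
  have hrsm : ∀ (t : ℝ), 0 < t → ∀ v, rho Φ (t • v) = rho Φ v := by
    intro t ht v
    simp only [rho, hhom t ht.le, mul_inv, smul_smul]
    rw [mul_comm t⁻¹ (Φ v)⁻¹, mul_assoc, inv_mul_cancel₀ ht.ne', mul_one]
  constructor
  · intro hS
    have hTconv : Convex ℝ {z | rho Φ z ∈ S} := by
      intro z hz w hw a b ha hb hab
      simp only [mem_setOf_eq] at hz hw ⊢
      rcases ha.eq_or_lt with rfl | ha'
      · have hb1 : b = 1 := by linarith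
        simpa [hb1] using hw
      rcases hb.eq_or_lt with rfl | hb'
      · have ha1 : a = 1 := by linarith
        simpa [ha1] using hz
      -- both positive
      have hz0 : z ≠ 0 := by
        rintro rfl
        have : Φ (rho Φ (0 : EuclideanSpace ℝ (Fin n))) = 1 := hsub hz
        simp [rho, (hzero 0).mpr rfl] at this
      have hw0 : w ≠ 0 := by
        rintro rfl
        have : Φ (rho Φ (0 : EuclideanSpace ℝ (Fin n))) = 1 := hsub hw
        simp [rho, (hzero 0).mpr rfl] at this
      have hcz : 0 < Φ z := (hnn z).lt_of_ne (fun h => hz0 ((hzero z).mp h.symm))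
      have hcw : 0 < Φ w := (hnn w).lt_of_ne (fun h => hw0 ((hzero w).mp h.symm))
      set c := Φ z with hc'
      set d := Φ w with hd'
      have hzeq : z = c • rho Φ z := by
        simp [rho, smul_smul, mul_inv_cancel₀ hcz.ne']
        rw [← hc', mul_inv_cancel₀ hcz.ne', one_smul]
      have hweq : w = d • rho Φ w := by
        simp [rho, smul_smul, mul_inv_cancel₀ hcw.ne']
        rw [← hd', mul_inv_cancel₀ hcw.ne', one_smul]
      set t := a * c + b * d with ht'
      have htpos : 0 < t := by positivity
      set l := a * c / t with hl'
      have hl01 : l ∈ Set.Icc (0 : ℝ) 1 := by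
        constructor
        · positivity
        · rw [hl', div_le_one htpos]
          nlinarith
      have hcomb : a • z + b • w = t • (l • rho Φ z + (1 - l) • rho Φ w) := by
        rw [hzeq, hweq]
        have h1 : t * l = a * c := by
          field_simp [hl']
          rw [hl', mul_div_assoc', mul_comm t, mul_div_assoc, div_self htpos.ne', mul_one]
        have h2 : t * (1 - l) = b * d := by
          have : t * (1 - l) = t - t * l := by ring
          rw [this, h1]; ring
        rw [smul_add, smul_smul, smul_smul, smul_smul, smul_smul, h1, h2, hrsm c hcz, hrsm d hcw, hfix _ hz, hfix _ hw]
      rw [hcomb, hrsm t htpos]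
      exact hS _ hz _ hw l hl01
    apply Subset.antisymm
    · intro s hs
      exact ⟨s, subset_convexHull ℝ S hs, hfix s hs⟩
    · rintro _ ⟨z, hz, rfl⟩
      have hST : S ⊆ {z | rho Φ z ∈ S} := by
        intro s hs
        simpa [mem_setOf_eq, hfix s hs] using hs
      exact convexHull_min hST hTconv hz
  · intro hEq x hx y hy l hl
    rw [hEq]
    refine ⟨l • x + (1 - l) • y, ?_, rfl⟩
    exact (convex_convexHull ℝ S) (subset_convexHull ℝ S hx) (subset_convexHull ℝ S hy)
      hl.1 (by linarith [hl.2]) (by ring)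
end

section
/- Assume additionally that Φ is convex. Then a nonempty set S ⊆ S_Φ is s-convex if and only if (0,1]·S := {tx : t ∈ (0,1], x ∈ S} is convex. -/
open Set
open scoped RealInnerProductSpace

theorem stmt5 {n : ℕ} (hn : 2 ≤ n) (Φ : EuclideanSpace ℝ (Fin n) → ℝ)
    (hc : Continuous Φ) (hnn : ∀ x, 0 ≤ Φ x)
    (hhom : ∀ (t : ℝ), 0 ≤ t → ∀ x, Φ (t • x) = t * Φ x)
    (hzero : ∀ x, Φ x = 0 ↔ x = 0)
    (hconv : ConvexOn ℝ Set.univ Φ)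
    (S : Set (EuclideanSpace ℝ (Fin n))) (hne : S.Nonempty) (hsub : S ⊆ sphereSet Φ) :
    SConvex Φ S ↔ Convex ℝ {y | ∃ t : ℝ, t ∈ Set.Ioc (0 : ℝ) 1 ∧ ∃ x ∈ S, y = t • x} := by
  have hS1 : ∀ x ∈ S, Φ x = 1 := fun x hx => hsub hx
  constructor
  · -- s-convex → cone convex
    intro hS
    rintro y₁ ⟨t₁, ht₁, x₁, hx₁, rfl⟩ y₂ ⟨t₂, ht₂, x₂, hx₂, rfl⟩ a b ha hb hab
    set s : ℝ := a * t₁ + b * t₂ with hsdef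
    have hpos : 0 < a ∨ 0 < b := by
      by_contra h; push_neg at h; linarith
    have hs0 : 0 < s := by
      rcases hpos with h | h
      · have : 0 < a * t₁ := mul_pos h ht₁.1
        nlinarith [mul_nonneg hb ht₂.1.le]
      · have : 0 < b * t₂ := mul_pos h ht₂.1
        nlinarith [mul_nonneg ha ht₁.1.le]
    have hs1 : s ≤ 1 := by nlinarith [ht₁.2, ht₂.2]
    set μ : ℝ := a * t₁ / s with hμdef
    have hμ0 : 0 ≤ μ := div_nonneg (mul_nonneg ha ht₁.1.le) hs0.le
    have hμ1 : μ ≤ 1 := by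
      rw [hμdef, div_le_one hs0]
      nlinarith [mul_nonneg hb ht₂.1.le]
    set w : EuclideanSpace ℝ (Fin n) := μ • x₁ + (1 - μ) • x₂ with hwdef
    have hwS : rho Φ w ∈ S := hS x₁ hx₁ x₂ hx₂ μ ⟨hμ0, hμ1⟩
    have hwne : w ≠ 0 := by
      intro h
      have h0 : rho Φ w = 0 := by rw [rho, h, smul_zero]
      have := hS1 _ hwS
      rw [h0] at this
      have : (0 : ℝ) = 1 := by rw [← this, (hzero 0).2 rfl]
      norm_num at this
    have hΦw : 0 < Φ w := lt_of_le_of_ne (hnn w) (fun h => hwne ((hzero w).1 h.symm))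
    have hΦw1 : Φ w ≤ 1 := by
      have hle := hconv.2 (mem_univ x₁) (mem_univ x₂) hμ0
        (show (0:ℝ) ≤ 1 - μ by linarith) (show μ + (1 - μ) = 1 by ring)
      rw [hS1 x₁ hx₁, hS1 x₂ hx₂] at hle
      simp only [smul_eq_mul] at hle
      rw [hwdef]; linarith
    refine ⟨s * Φ w, ⟨mul_pos hs0 hΦw, ?_⟩, rho Φ w, hwS, ?_⟩
    · calc s * Φ w ≤ s * 1 := by nlinarith
        _ ≤ 1 := by linarith
    · have key : (s * Φ w) • rho Φ w = s • w := by
        have hcc : s * Φ w * (Φ w)⁻¹ = s := by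
          field_simp
        rw [rho, smul_smul, hcc]
      have h1 : s * μ = a * t₁ := by
        rw [hμdef]
        field_simp
      have h2 : s * (1 - μ) = b * t₂ := by
        have h3 : s * μ + s * (1 - μ) = s := by ring
        rw [h1, hsdef] at h3
        linarith
      have hsw : s • w = (a * t₁) • x₁ + (b * t₂) • x₂ := by
        rw [hwdef, smul_add, smul_smul, smul_smul, h1, h2]
      rw [key, hsw, smul_smul, smul_smul]
  · -- cone convex → s-convex
    intro hC x hx y hy l hl
    have hxC : x ∈ {y | ∃ t : ℝ, t ∈ Set.Ioc (0 : ℝ) 1 ∧ ∃ x ∈ S, y = t • x} :=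
      ⟨1, ⟨one_pos, le_refl 1⟩, x, hx, (one_smul ℝ x).symm⟩
    have hyC : y ∈ {y | ∃ t : ℝ, t ∈ Set.Ioc (0 : ℝ) 1 ∧ ∃ x ∈ S, y = t • x} :=
      ⟨1, ⟨one_pos, le_refl 1⟩, y, hy, (one_smul ℝ y).symm⟩
    obtain ⟨t, ht, w, hw, heq⟩ := hC hxC hyC (a := l) (b := 1 - l) hl.1
      (by linarith [hl.2]) (by ring)
    rw [heq, rho, hhom t ht.1.le, hS1 w hw, mul_one, smul_smul,
      inv_mul_cancel₀ ht.1.ne', one_smul]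
    exact hw
end

section
/- If S ⊆ S_Φ is a nonempty s-convex set, then 0 ∉ conv S. -/
open Set
open scoped RealInnerProductSpace

lemma key_aux {n : ℕ} (Φ : EuclideanSpace ℝ (Fin n) → ℝ)
    (hnn : ∀ x, 0 ≤ Φ x)
    (hzero : ∀ x, Φ x = 0 ↔ x = 0)
    (S : Set (EuclideanSpace ℝ (Fin n))) (hsub : S ⊆ sphereSet Φ)
    (hS : SConvex Φ S) :
    ∀ (m : ℕ), 0 < m → ∀ (w : Fin m → ℝ) (z : Fin m → EuclideanSpace ℝ (Fin n)),
      (∀ i, 0 < w i) → (∀ i, z i ∈ S) → ∑ i, w i • z i ≠ 0 := by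
  intro m
  induction m with
  | zero => omega
  | succ k ih =>
    intro _ w z hw hz hsum
    cases k with
    | zero =>
      rw [Fin.sum_univ_one] at hsum
      have hz0 : z 0 = 0 := by
        rcases smul_eq_zero.mp hsum with h | h
        · exact absurd h (ne_of_gt (hw 0))
        · exact h
      have h1 : Φ (z 0) = 1 := hsub (hz 0)
      have h0 : Φ (z 0) = 0 := (hzero (z 0)).mpr hz0
      linarith
    | succ k =>
      set wc : ℝ := w 0 + w 1 with hwc_def
      have hwc : 0 < wc := add_pos (hw 0) (hw 1)
      set μ : ℝ := w 0 / wc with hμ_def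
      have hμ0 : 0 ≤ μ := div_nonneg (hw 0).le hwc.le
      have hμ1 : μ ≤ 1 := (div_le_one hwc).mpr (by linarith [hw 1])
      set y : EuclideanSpace ℝ (Fin n) := μ • z 0 + (1 - μ) • z 1 with hy_def
      have hρ : rho Φ y ∈ S := hS _ (hz 0) _ (hz 1) μ ⟨hμ0, hμ1⟩
      have hy0 : y ≠ 0 := by
        intro h
        have h1 : Φ (rho Φ y) = 1 := hsub hρ
        rw [h] at h1
        simp only [rho, smul_zero] at h1
        have : Φ 0 = 0 := (hzero 0).mpr rfl
        rw [this] at h1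
        norm_num at h1
      have hΦy : Φ y ≠ 0 := fun h => hy0 ((hzero y).mp h)
      have hΦypos : 0 < Φ y := lt_of_le_of_ne (hnn y) (Ne.symm hΦy)
      -- combined point and weights
      refine ih k.succ_pos (Fin.cons (wc * Φ y) (fun i => w i.succ.succ))
        (Fin.cons (rho Φ y) (fun i => z i.succ.succ)) ?_ ?_ ?_
      · intro i
        refine Fin.cases ?_ ?_ i
        · simpa using mul_pos hwc hΦypos
        · intro i; simpa using hw i.succ.succ
      · intro i
        refine Fin.cases ?_ ?_ i
        · simpa using hρ
        · intro i; simpa using hz i.succ.succ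
      · rw [Fin.sum_univ_succ]
        simp only [Fin.cons_zero, Fin.cons_succ]
        have hkey : (wc * Φ y) • rho Φ y = w 0 • z 0 + w 1 • z 1 := by
          have h1 : (wc * Φ y) • rho Φ y = wc • y := by
            rw [rho, smul_smul, mul_assoc, mul_inv_cancel₀ hΦy, mul_one]
          rw [h1, hy_def, smul_add, smul_smul, smul_smul]
          have h2 : wc * μ = w 0 := by
            rw [hμ_def]; field_simp
          have h3 : wc * (1 - μ) = w 1 := by
            have : wc * (1 - μ) = wc - wc * μ := by ring
            rw [this, h2, hwc_def]; ring
          rw [h2, h3]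
        rw [hkey]
        rw [Fin.sum_univ_succ, Fin.sum_univ_succ] at hsum
        rw [show (Fin.succ 0 : Fin (k+1+1)) = 1 from rfl] at hsum
        rw [add_assoc]
        exact hsum
      
theorem stmt6 {n : ℕ} (hn : 2 ≤ n) (Φ : EuclideanSpace ℝ (Fin n) → ℝ)
    (hc : Continuous Φ) (hnn : ∀ x, 0 ≤ Φ x)
    (hhom : ∀ (t : ℝ), 0 ≤ t → ∀ x, Φ (t • x) = t * Φ x)
    (hzero : ∀ x, Φ x = 0 ↔ x = 0)
    (S : Set (EuclideanSpace ℝ (Fin n))) (hne : S.Nonempty) (hsub : S ⊆ sphereSet Φ)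
    (hS : SConvex Φ S) :
    (0 : EuclideanSpace ℝ (Fin n)) ∉ convexHull ℝ S := by
  intro h0
  rw [mem_convexHull_iff_exists_fintype] at h0
  obtain ⟨ι, _, w, z, hw0, hw1, hz, hsum⟩ := h0
  classical
  set t : Finset ι := Finset.univ.filter (fun i => 0 < w i) with ht_def
  have hwt : ∀ i ∉ t, w i = 0 := by
    intro i hi
    simp only [ht_def, Finset.mem_filter, Finset.mem_univ, true_and, not_lt] at hi
    exact le_antisymm hi (hw0 i)
  have hsum1 : ∑ i ∈ t, w i = 1 := by
    rw [← hw1]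
    exact Finset.sum_subset (Finset.subset_univ t) (fun i _ hi => hwt i hi)
  have hsum0 : ∑ i ∈ t, w i • z i = 0 := by
    rw [← hsum]
    exact Finset.sum_subset (Finset.subset_univ t)
      (fun i _ hi => by rw [hwt i hi, zero_smul])
  have htne : t.Nonempty := by
    rcases Finset.eq_empty_or_nonempty t with h | h
    · rw [h, Finset.sum_empty] at hsum1; norm_num at hsum1
    · exact h
  have hcard : 0 < t.card := Finset.card_pos.mpr htne
  let e := t.equivFin
  have := key_aux Φ hnn hzero S hsub hS t.card hcard
    (fun j => w (e.symm j)) (fun j => z (e.symm j))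
    (fun j => by
      have := (e.symm j).2
      simp only [ht_def, Finset.mem_filter] at this
      exact this.2)
    (fun j => hz _)
  apply this
  calc ∑ j : Fin t.card, w (e.symm j) • z (e.symm j)
      = ∑ i : {x // x ∈ t}, w i • z i := Equiv.sum_comp e.symm (fun i => w i.1 • z i.1)
    _ = ∑ i ∈ t, w i • z i := Finset.sum_coe_sort t (fun x => w x • z x)
    _ = 0 := hsum0
end

section
/- If C ⊆ S_Φ is a nonempty s-convex set, then there exists a unit vector u₀ ∈ ℝⁿ such that ⟨x, u₀⟩ ≥ 0 for all x ∈ C; i.e., C is contained in a closed hemisphere. -/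
open Set
open scoped RealInnerProductSpace

theorem stmt8 {n : ℕ} (hn : 2 ≤ n) (Φ : EuclideanSpace ℝ (Fin n) → ℝ)
    (hc : Continuous Φ) (hnn : ∀ x, 0 ≤ Φ x)
    (hhom : ∀ (t : ℝ), 0 ≤ t → ∀ x, Φ (t • x) = t * Φ x)
    (hzero : ∀ x, Φ x = 0 ↔ x = 0)
    (C : Set (EuclideanSpace ℝ (Fin n))) (hne : C.Nonempty) (hsub : C ⊆ sphereSet Φ)
    (hC : SConvex Φ C) :
    ∃ u₀ : EuclideanSpace ℝ (Fin n), ‖u₀‖ = 1 ∧ ∀ x ∈ C, 0 ≤ ⟪x, u₀⟫ := by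
  classical
  -- The cone generated by C
  set K : Set (EuclideanSpace ℝ (Fin n)) := {y | ∃ t : ℝ, 0 ≤ t ∧ ∃ x ∈ C, y = t • x} with hKdef
  have hCK : C ⊆ K := fun x hx => ⟨1, zero_le_one, x, hx, (one_smul ℝ x).symm⟩
  have h0mem : (0 : EuclideanSpace ℝ (Fin n)) ∈ K := by
    obtain ⟨x, hx⟩ := hne
    exact ⟨0, le_refl 0, x, hx, (zero_smul ℝ x).symm⟩
  have hΦ0 : Φ 0 = 0 := (hzero 0).mpr rfl
  -- K is convex
  have hconv : Convex ℝ K := by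
    rintro y₁ ⟨s, hs, x₁, hx₁, rfl⟩ y₂ ⟨t, ht, x₂, hx₂, rfl⟩ a b ha hb hab
    rw [smul_smul, smul_smul]
    set p := a * s with hp
    set q := b * t with hq
    have hp0 : 0 ≤ p := mul_nonneg ha hs
    have hq0 : 0 ≤ q := mul_nonneg hb ht
    rcases eq_or_lt_of_le (by positivity : (0:ℝ) ≤ p + q) with hμ | hμ
    · have hp' : p = 0 := by linarith
      have hq' : q = 0 := by linarith
      rw [hp', hq', zero_smul, zero_smul, add_zero]
      exact h0mem
    · set μ := p + q with hμdef
      set l := p / μ with hl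
      have hl0 : 0 ≤ l := div_nonneg hp0 hμ.le
      have hl1 : l ≤ 1 := by
        rw [hl, div_le_one hμ]; linarith
      have h1l : 1 - l = q / μ := by
        rw [hl, eq_div_iff hμ.ne', sub_mul, div_mul_cancel₀ _ hμ.ne']
        rw [hμdef]; ring
      set z := l • x₁ + (1 - l) • x₂ with hz
      have hkey : p • x₁ + q • x₂ = μ • z := by
        rw [hz, smul_add, smul_smul, smul_smul, h1l]
        rw [mul_div_cancel₀ _ hμ.ne', mul_div_cancel₀ _ hμ.ne']
      have hρ : rho Φ z ∈ C := hC x₁ hx₁ x₂ hx₂ l ⟨hl0, hl1⟩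
      rcases eq_or_lt_of_le (hnn z) with hΦz | hΦz
      · have hz0 : z = 0 := (hzero z).mp hΦz.symm
        rw [hkey, hz0, smul_zero]
        exact h0mem
      · refine ⟨μ * Φ z, by positivity, rho Φ z, hρ, ?_⟩
        rw [hkey, rho, smul_smul, mul_assoc, mul_inv_cancel₀ hΦz.ne', mul_one]
  -- K is salient
  have hsal : ∀ v ∈ K, -v ∈ K → v = 0 := by
    rintro (v : EuclideanSpace ℝ (Fin n)) ⟨s, hs, x, hx, hvx⟩ ⟨t, ht, y, hy, hvy⟩
    by_contra hv0
    have hs0 : 0 < s := lt_of_le_of_ne hs (by rintro rfl; exact hv0 (by simp [hvx]))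
    have ht0 : 0 < t := lt_of_le_of_ne ht (by
      rintro rfl
      exact hv0 (by simpa using congrArg Neg.neg hvy))
    have hst : 0 < s + t := by linarith
    set l := s / (s + t) with hl
    have hl0 : 0 ≤ l := by positivity
    have hl1 : l ≤ 1 := by rw [hl, div_le_one hst]; linarith
    have h1l : 1 - l = t / (s + t) := by rw [hl, eq_div_iff hst.ne', sub_mul, div_mul_cancel₀ _ hst.ne']; ring
    have hsum : s • x + t • y = 0 := by
      rw [← hvx, ← hvy]; simp
    have hcomb : l • x + (1 - l) • y = 0 := by
      have : l • x + (1 - l) • y = (s + t)⁻¹ • (s • x + t • y) := by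
        rw [smul_add, smul_smul, smul_smul, h1l, hl]
        rw [inv_mul_eq_div, inv_mul_eq_div]
      rw [this, hsum, smul_zero]
    have h0C : (0 : EuclideanSpace ℝ (Fin n)) ∈ C := by
      have := hC x hx y hy l ⟨hl0, hl1⟩
      rw [hcomb] at this
      simpa [rho] using this
    have : Φ 0 = 1 := hsub h0C
    rw [hΦ0] at this
    norm_num at this
  -- helper: nontrivial space
  haveI : NeZero n := ⟨by omega⟩
  have hE : ∃ v : EuclideanSpace ℝ (Fin n), v ≠ 0 := by
    refine ⟨EuclideanSpace.single ⟨0, by omega⟩ (1:ℝ), ?_⟩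
    intro h
    have := congrArg (fun f : EuclideanSpace ℝ (Fin n) => f ⟨0, by omega⟩) h
    simp [EuclideanSpace.single] at this
  -- normalization helper
  have hnorm : ∀ u : EuclideanSpace ℝ (Fin n), u ≠ 0 → (∀ x ∈ C, 0 ≤ ⟪x, u⟫) →
      ∃ u₀ : EuclideanSpace ℝ (Fin n), ‖u₀‖ = 1 ∧ ∀ x ∈ C, 0 ≤ ⟪x, u₀⟫ := by
    intro u hu h
    refine ⟨‖u‖⁻¹ • u, ?_, ?_⟩
    · rw [norm_smul, norm_inv, norm_norm, inv_mul_cancel₀ (norm_ne_zero_iff.mpr hu)]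
    · intro x hx
      rw [real_inner_smul_right]
      exact mul_nonneg (inv_nonneg.mpr (norm_nonneg u)) (h x hx)
  by_cases hint : (interior K).Nonempty
  · -- nonempty interior: separate 0 from interior K
    have h0K : (0 : EuclideanSpace ℝ (Fin n)) ∉ interior K := by
      intro h
      rw [mem_interior_iff_mem_nhds, Metric.mem_nhds_iff] at h
      obtain ⟨ε, hε, hball⟩ := h
      obtain ⟨v, hv⟩ := hE
      have hvn : 0 < ‖v‖ := norm_pos_iff.mpr hv
      set w := (ε / (2 * ‖v‖)) • v with hw
      have hwn : ‖w‖ = ε / 2 := by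
        rw [hw, norm_smul, Real.norm_eq_abs, abs_of_pos (by positivity)]
        field_simp
      have hw0 : w ≠ 0 := by
        rw [hw]; exact smul_ne_zero (by positivity) hv
      have hwK : w ∈ K := hball (by simp [Metric.mem_ball, hwn]; linarith)
      have hwK' : -w ∈ K := hball (by simp [Metric.mem_ball, hwn]; linarith)
      exact hw0 (hsal w hwK hwK')
    obtain ⟨f, hf⟩ := geometric_hahn_banach_open_point hconv.interior isOpen_interior h0K
    simp only [map_zero] at hf
    obtain ⟨p, hp⟩ := hint
    have hfp : f p < 0 := hf p hp
    have hfK : ∀ x ∈ K, f x ≤ 0 := by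
      intro x hx
      by_contra hpos
      push_neg at hpos
      have hd : 0 < f x - f p := by linarith
      set t₀ := f x / (f x - f p) with ht₀def
      have ht₀ : 0 < t₀ := by positivity
      have ht₀1 : t₀ ≤ 1 := by
        rw [ht₀def, div_le_one hd]; linarith
      have hmem : x + t₀ • (p - x) ∈ interior K :=
        hconv.add_smul_mem_interior hx (by simpa using hp) ⟨ht₀, ht₀1⟩
      have := hf _ hmem
      rw [map_add, map_smul, map_sub] at this
      have hcalc : t₀ * (f p - f x) = - f x := by
        rw [ht₀def]
        field_simp
        ring
      simp only [smul_eq_mul] at this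
      linarith
    set u : EuclideanSpace ℝ (Fin n) := -(InnerProductSpace.toDual ℝ (EuclideanSpace ℝ (Fin n))).symm f with hu
    have hu0 : u ≠ 0 := by
      rw [hu, neg_ne_zero]
      intro h
      have : f = 0 := by
        have := congrArg (InnerProductSpace.toDual ℝ (EuclideanSpace ℝ (Fin n))) h
        simpa using this
      rw [this] at hfp
      simp at hfp
    refine hnorm u hu0 ?_
    intro x hx
    rw [real_inner_comm, hu, inner_neg_left, InnerProductSpace.toDual_symm_apply]
    have := hfK x (hCK hx)
    linarith
  · -- empty interior: K spans a proper subspace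
    have haff : affineSpan ℝ K ≠ ⊤ := by
      intro h
      exact hint (hconv.interior_nonempty_iff_affineSpan_eq_top.mpr h)
    have hspan : Submodule.span ℝ K ≠ ⊤ := by
      intro h
      apply haff
      rw [AffineSubspace.affineSpan_eq_top_iff_vectorSpan_eq_top_of_nonempty ℝ (EuclideanSpace ℝ (Fin n)) (EuclideanSpace ℝ (Fin n)) ⟨0, h0mem⟩]
      rw [eq_top_iff, ← h]
      rw [Submodule.span_le]
      intro x hx
      have := vsub_mem_vectorSpan ℝ hx h0mem
      simpa using this
    have horth : (Submodule.span ℝ K)ᗮ ≠ ⊥ := by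
      intro h
      exact hspan (Submodule.orthogonal_eq_bot_iff.mp h)
    obtain ⟨u, hu, hu0⟩ := Submodule.ne_bot_iff _ |>.mp horth
    refine hnorm u hu0 ?_
    intro x hx
    have hxW : x ∈ Submodule.span ℝ K := Submodule.subset_span (hCK hx)
    rw [(Submodule.mem_orthogonal _ u).mp hu x hxW]
end

section
/- If C ⊆ S_Φ is a nonempty closed s-convex set, then there exist a unit vector u₀ ∈ ℝⁿ and α > 0 such that ⟨x, u₀⟩ ≥ α for all x ∈ C; i.e., C is contained in an open hemisphere, uniformly. -/
open Set
open scoped RealInnerProductSpace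

/-- Padding a sum over a finset to a sum over `Fin d`. -/
lemma sum_pad {α : Type*} {M : Type*} [AddCommMonoid M] (t : Finset α) {d : ℕ}
    (hcard : t.card ≤ d) (F : α → M) :
    ∑ i : Fin d, (if h : (i : ℕ) < t.card then F ((t.equivFin.symm ⟨(i : ℕ), h⟩ : t) : α) else 0)
      = ∑ y ∈ t, F y := by
  classical
  set f : ℕ → M := fun i => if h : i < t.card then F ((t.equivFin.symm ⟨i, h⟩ : t) : α) else 0
    with hf
  have h1 : ∑ i : Fin d, f (i : ℕ) = ∑ i ∈ Finset.range d, f i :=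
    Fin.sum_univ_eq_sum_range f d
  have h2 : ∑ i ∈ Finset.range d, f i = ∑ i ∈ Finset.range t.card, f i := by
    refine (Finset.sum_subset (Finset.range_subset_range.2 hcard) ?_).symm
    intro i _ hi
    simp only [Finset.mem_range, not_lt] at hi
    simp [hf, Nat.not_lt.2 hi]
  have h3 : ∑ i ∈ Finset.range t.card, f i = ∑ j : Fin t.card, f (j : ℕ) :=
    (Fin.sum_univ_eq_sum_range f t.card).symm
  have h4 : ∑ j : Fin t.card, f (j : ℕ) = ∑ j : Fin t.card, F ((t.equivFin.symm j : t) : α) := by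
    refine Finset.sum_congr rfl fun j _ => ?_
    simp [hf, j.isLt]
  have h5 : ∑ j : Fin t.card, F ((t.equivFin.symm j : t) : α) = ∑ y : t, F (y : α) :=
    Equiv.sum_comp t.equivFin.symm (fun y : t => F (y : α))
  have h6 : ∑ y : t, F (y : α) = ∑ y ∈ t, F y := Finset.sum_coe_sort t F
  calc ∑ i : Fin d, f (i : ℕ) = _ := h1
    _ = _ := h2
    _ = _ := h3
    _ = _ := h4
    _ = _ := h5
    _ = _ := h6

theorem stmt9 {n : ℕ} (hn : 2 ≤ n) (Φ : EuclideanSpace ℝ (Fin n) → ℝ)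
    (hc : Continuous Φ) (hnn : ∀ x, 0 ≤ Φ x)
    (hhom : ∀ (t : ℝ), 0 ≤ t → ∀ x, Φ (t • x) = t * Φ x)
    (hzero : ∀ x, Φ x = 0 ↔ x = 0)
    (C : Set (EuclideanSpace ℝ (Fin n))) (hne : C.Nonempty) (hsub : C ⊆ sphereSet Φ)
    (hcl : IsClosed C) (hC : SConvex Φ C) :
    ∃ u₀ : EuclideanSpace ℝ (Fin n), ‖u₀‖ = 1 ∧ ∃ α : ℝ, 0 < α ∧ ∀ x ∈ C, α ≤ ⟪x, u₀⟫ := by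
  classical
  -- basic facts
  have hpos : ∀ x : EuclideanSpace ℝ (Fin n), x ≠ 0 → 0 < Φ x := fun x hx =>
    lt_of_le_of_ne (hnn x) (fun h => hx ((hzero x).1 h.symm))
  have hΦ0 : Φ 0 = 0 := (hzero 0).2 rfl
  have hC0 : (0 : EuclideanSpace ℝ (Fin n)) ∉ C := by
    intro h
    have := hsub h
    simp only [sphereSet, mem_setOf_eq] at this
    rw [hΦ0] at this; norm_num at this
  have hrho_self : ∀ x ∈ C, rho Φ x = x := by
    intro x hx
    have h1 : Φ x = 1 := hsub hx
    simp [rho, h1]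
  -- the auxiliary convex set D
  set D : Set (EuclideanSpace ℝ (Fin n)) := {x | x ≠ 0 ∧ rho Φ x ∈ C} with hD
  have hCD : C ⊆ D := by
    intro x hx
    refine ⟨?_, by rw [hrho_self x hx]; exact hx⟩
    intro h; rw [h] at hx; exact hC0 hx
  have hDconv : Convex ℝ D := by
    rintro x ⟨hx0, hxC⟩ y ⟨hy0, hyC⟩ a b ha hb hab
    have hΦx : 0 < Φ x := hpos x hx0
    have hΦy : 0 < Φ y := hpos y hy0
    set px := rho Φ x with hpx
    set py := rho Φ y with hpy
    have hxp : x = Φ x • px := by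
      rw [hpx]; simp [rho, smul_smul, mul_inv_cancel₀ hΦx.ne']
    have hyp : y = Φ y • py := by
      rw [hpy]; simp [rho, smul_smul, mul_inv_cancel₀ hΦy.ne']
    set a' := a * Φ x with ha'
    set b' := b * Φ y with hb'
    have ha'0 : 0 ≤ a' := mul_nonneg ha hΦx.le
    have hb'0 : 0 ≤ b' := mul_nonneg hb hΦy.le
    have ht : 0 < a' + b' := by
      rcases ha.lt_or_eq with h | h
      · have : 0 < a' := mul_pos h hΦx; linarith
      · have hb1 : b = 1 := by linarith
        have : 0 < b' := by rw [hb', hb1, one_mul]; exact hΦy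
        linarith
    set t := a' + b' with htdef
    set μ := a' / t with hμdef
    have hμ : μ ∈ Set.Icc (0 : ℝ) 1 := by
      constructor
      · exact div_nonneg ha'0 ht.le
      · rw [hμdef, div_le_one ht]; linarith
    have h1μ : 1 - μ = b' / t := by
      rw [hμdef]; field_simp; rw [htdef]; ring
    set w := μ • px + (1 - μ) • py with hw
    have hwC : rho Φ w ∈ C := hC px hxC py hyC μ hμ
    have hw0 : w ≠ 0 := by
      intro h
      rw [h] at hwC
      simp only [rho, smul_zero] at hwC
      exact hC0 hwC
    have hΦw : 0 < Φ w := hpos w hw0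
    have hz : a • x + b • y = t • w := by
      rw [hw, smul_add, smul_smul, smul_smul, h1μ, hμdef,
        mul_div_cancel₀ _ ht.ne', mul_div_cancel₀ _ ht.ne']
      nth_rewrite 1 [hxp]; nth_rewrite 1 [hyp]
      rw [smul_smul, smul_smul, ha', hb']
    have hΦz : Φ (a • x + b • y) = t * Φ w := by rw [hz, hhom t ht.le]
    constructor
    · rw [hz]; exact smul_ne_zero ht.ne' hw0
    · have : rho Φ (a • x + b • y) = rho Φ w := by
        simp only [rho]
        rw [hΦz, hz, smul_smul]
        congr 1
        rw [mul_inv, mul_comm, ← mul_assoc, mul_inv_cancel₀ ht.ne', one_mul]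
      rw [this]; exact hwC
  have hhullD : convexHull ℝ C ⊆ D := convexHull_min hCD hDconv
  have h0hull : (0 : EuclideanSpace ℝ (Fin n)) ∉ convexHull ℝ C := fun h => (hhullD h).1 rfl
  -- C is compact
  have hsC : IsCompact C := by
    refine Metric.isCompact_of_isClosed_isBounded hcl ?_
    have hsph : IsCompact (Metric.sphere (0 : EuclideanSpace ℝ (Fin n)) 1) := isCompact_sphere 0 1
    have hnesph : (Metric.sphere (0 : EuclideanSpace ℝ (Fin n)) 1).Nonempty := by
      refine ⟨EuclideanSpace.single (⟨0, by omega⟩ : Fin n) (1 : ℝ), ?_⟩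
      simp [EuclideanSpace.norm_single]
    obtain ⟨z, hz, hmin⟩ := hsph.exists_isMinOn hnesph hc.continuousOn
    have hz1 : ‖z‖ = 1 := by simpa using hz
    have hz0 : z ≠ 0 := by intro h; rw [h] at hz1; simp at hz1
    set m := Φ z with hm
    have hm0 : 0 < m := hpos z hz0
    rw [isBounded_iff_forall_norm_le]
    refine ⟨m⁻¹, fun x hx => ?_⟩
    have hx0 : x ≠ 0 := fun h => hC0 (h ▸ hx)
    have hr : 0 < ‖x‖ := norm_pos_iff.2 hx0
    have hmem : ‖x‖⁻¹ • x ∈ Metric.sphere (0 : EuclideanSpace ℝ (Fin n)) 1 := by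
      simp [norm_smul, abs_of_pos (inv_pos.2 hr), inv_mul_cancel₀ hr.ne']
    have h1 : m ≤ Φ (‖x‖⁻¹ • x) := hmin hmem
    have h2 : Φ x = ‖x‖ * Φ (‖x‖⁻¹ • x) := by
      have := hhom ‖x‖ hr.le (‖x‖⁻¹ • x)
      rw [smul_smul, mul_inv_cancel₀ hr.ne', one_smul] at this
      linarith
    have h3 : Φ x = 1 := hsub hx
    have : ‖x‖ * m ≤ 1 := by
      calc ‖x‖ * m ≤ ‖x‖ * Φ (‖x‖⁻¹ • x) := by
            exact mul_le_mul_of_nonneg_left h1 hr.le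
        _ = Φ x := h2.symm
        _ = 1 := h3
    rw [← one_div, le_div_iff₀ hm0]
    linarith
  -- convexHull ℝ C is compact (Carathéodory)
  set d := n + 1 with hd
  set g : (Fin d → ℝ) × (Fin d → EuclideanSpace ℝ (Fin n)) → EuclideanSpace ℝ (Fin n) := fun p => ∑ i, p.1 i • p.2 i with hg
  have hgc : Continuous g := by
    apply continuous_finset_sum
    intro i _
    exact ((continuous_apply i).comp continuous_fst).smul
      ((continuous_apply i).comp continuous_snd)
  set T : Set ((Fin d → ℝ) × (Fin d → EuclideanSpace ℝ (Fin n))) :=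
    (stdSimplex ℝ (Fin d)) ×ˢ Set.univ.pi (fun _ : Fin d => C) with hT
  have hTc : IsCompact T := IsCompact.prod (isCompact_stdSimplex (𝕜 := ℝ) (ι := Fin d)) (isCompact_univ_pi fun _ => hsC)
  have hKeq : convexHull ℝ C = g '' T := by
    apply Subset.antisymm
    · intro x hx
      rw [convexHull_eq_union] at hx
      simp only [mem_iUnion] at hx
      obtain ⟨t, hts, hai, hxt⟩ := hx
      have hcard : t.card ≤ d := by
        have h1 := hai.card_le_finrank_succ
        have h2 : Module.finrank ℝ
            (vectorSpan ℝ (Set.range ((↑) : t → EuclideanSpace ℝ (Fin n)))) ≤ n := by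
          have h3 := Submodule.finrank_le (vectorSpan ℝ (Set.range ((↑) : t → EuclideanSpace ℝ (Fin n))))
          rwa [finrank_euclideanSpace_fin] at h3
        rw [Fintype.card_coe] at h1
        omega
      rw [Finset.convexHull_eq] at hxt
      obtain ⟨w, hw0, hw1, hwx⟩ := hxt
      obtain ⟨c₀, hc₀⟩ := hne
      set w' : Fin d → ℝ := fun i =>
        if h : (i : ℕ) < t.card then w ((t.equivFin.symm ⟨(i : ℕ), h⟩ : t) : EuclideanSpace ℝ (Fin n)) else 0 with hw'
      set z' : Fin d → EuclideanSpace ℝ (Fin n) := fun i =>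
        if h : (i : ℕ) < t.card then ((t.equivFin.symm ⟨(i : ℕ), h⟩ : t) : EuclideanSpace ℝ (Fin n)) else c₀ with hz'
      have hw'sum : ∑ i, w' i = 1 := by
        rw [hw']; rw [sum_pad t hcard w]; exact hw1
      have hsum2 : ∑ i, w' i • z' i = x := by
        have heq : ∀ i : Fin d, w' i • z' i =
            (if h : (i : ℕ) < t.card then
              (fun y : EuclideanSpace ℝ (Fin n) => w y • y) ((t.equivFin.symm ⟨(i : ℕ), h⟩ : t) : EuclideanSpace ℝ (Fin n)) else 0) := by
          intro i
          rw [hw', hz']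
          by_cases h : (i : ℕ) < t.card <;> simp [h]
        rw [Finset.sum_congr rfl (fun i _ => heq i), sum_pad t hcard (fun y : EuclideanSpace ℝ (Fin n) => w y • y)]
        rw [Finset.centerMass_eq_of_sum_1 _ _ hw1] at hwx
        simpa using hwx
      refine ⟨(w', z'), ⟨?_, ?_⟩, hsum2⟩
      · constructor
        · intro i
          rw [hw']
          by_cases h : (i : ℕ) < t.card
          · simp only [h, dif_pos]
            exact hw0 _ (Finset.coe_mem _)
          · simp [h]
        · exact hw'sum
      · intro i _
        rw [hz']
        by_cases h : (i : ℕ) < t.card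
        · simp only [h, dif_pos]
          exact hts (Finset.coe_mem _)
        · simpa [h] using hc₀
    · rintro x ⟨⟨w, zf⟩, ⟨hw, hzf⟩, rfl⟩
      obtain ⟨hw0, hw1⟩ := hw
      have := Finset.centerMass_mem_convexHull (Finset.univ : Finset (Fin d))
        (fun i _ => hw0 i) (by rw [hw1]; norm_num)
        (fun i _ => hzf i (mem_univ i))
      rwa [Finset.centerMass_eq_of_sum_1 _ _ hw1] at this
  have hKcl : IsClosed (convexHull ℝ C) := by
    rw [hKeq]; exact (hTc.image hgc).isClosed
  -- separation
  obtain ⟨f, u, hfu, hub⟩ :=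
    geometric_hahn_banach_point_closed (convex_convexHull ℝ C) hKcl h0hull
  have hu : 0 < u := by simpa using hfu
  set y := (InnerProductSpace.toDual ℝ (EuclideanSpace ℝ (Fin n))).symm f with hy
  have hyb : ∀ b : EuclideanSpace ℝ (Fin n), ⟪y, b⟫ = f b := fun b => InnerProductSpace.toDual_symm_apply
  obtain ⟨c, hc'⟩ := hne
  have hchull : c ∈ convexHull ℝ C := subset_convexHull ℝ C hc'
  have hy0 : y ≠ 0 := by
    intro h
    have h1 := hyb c
    rw [h, inner_zero_left] at h1
    have := hub c hchull
    rw [← h1] at this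
    linarith
  have hynorm : 0 < ‖y‖ := norm_pos_iff.2 hy0
  refine ⟨‖y‖⁻¹ • y, ?_, u / ‖y‖, div_pos hu hynorm, ?_⟩
  · rw [norm_smul, norm_inv, norm_norm, inv_mul_cancel₀ hynorm.ne']
  · intro x hx
    have hxhull : x ∈ convexHull ℝ C := subset_convexHull ℝ C hx
    have h1 : ⟪x, ‖y‖⁻¹ • y⟫ = ‖y‖⁻¹ * ⟪x, y⟫ := real_inner_smul_right x y ‖y‖⁻¹
    have h2 : ⟪x, y⟫ = f x := by rw [real_inner_comm]; exact hyb x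
    rw [h1, h2, div_eq_inv_mul]
    exact mul_le_mul_of_nonneg_left (hub x hxhull).le (inv_nonneg.2 hynorm.le)
end

section
/- A nonempty set S ⊆ S_Φ is closed and s-convex if and only if ℝ₊S is a pointed, closed, convex cone in ℝⁿ. -/
open Set
open scoped RealInnerProductSpace

theorem stmt10 {n : ℕ} (hn : 2 ≤ n) (Φ : EuclideanSpace ℝ (Fin n) → ℝ)
    (hc : Continuous Φ) (hnn : ∀ x, 0 ≤ Φ x)
    (hhom : ∀ (t : ℝ), 0 ≤ t → ∀ x, Φ (t • x) = t * Φ x)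
    (hzero : ∀ x, Φ x = 0 ↔ x = 0)
    (S : Set (EuclideanSpace ℝ (Fin n))) (hne : S.Nonempty) (hsub : S ⊆ sphereSet Φ) :
    (IsClosed S ∧ SConvex Φ S) ↔
      (Convex ℝ {y | ∃ t : ℝ, 0 ≤ t ∧ ∃ x ∈ S, y = t • x} ∧
       (∀ c : ℝ, 0 ≤ c → ∀ y ∈ {y | ∃ t : ℝ, 0 ≤ t ∧ ∃ x ∈ S, y = t • x},
          c • y ∈ {y | ∃ t : ℝ, 0 ≤ t ∧ ∃ x ∈ S, y = t • x}) ∧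
       IsClosed {y | ∃ t : ℝ, 0 ≤ t ∧ ∃ x ∈ S, y = t • x} ∧
       {y | ∃ t : ℝ, 0 ≤ t ∧ ∃ x ∈ S, y = t • x} ∩
         (-{y | ∃ t : ℝ, 0 ≤ t ∧ ∃ x ∈ S, y = t • x}) = {0}) := by
  set K : Set (EuclideanSpace ℝ (Fin n)) :=
    {y | ∃ t : ℝ, 0 ≤ t ∧ ∃ x ∈ S, y = t • x} with hKdef
  have hΦ0 : Φ 0 = 0 := by
    have h := hhom 0 le_rfl 0
    simpa using h
  have hS1 : ∀ x ∈ S, Φ x = 1 := fun x hx => hsub hx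
  have hSne0 : ∀ x ∈ S, x ≠ 0 := by
    intro x hx h0
    have := hS1 x hx
    rw [h0, hΦ0] at this
    norm_num at this
  have h0K : (0 : EuclideanSpace ℝ (Fin n)) ∈ K := by
    obtain ⟨x, hx⟩ := hne
    exact ⟨0, le_rfl, x, hx, by simp⟩
  have hΦK : ∀ t : ℝ, 0 ≤ t → ∀ x ∈ S, Φ (t • x) = t := by
    intro t ht x hx
    rw [hhom t ht x, hS1 x hx, mul_one]
  constructor
  · rintro ⟨hScl, hscv⟩
    -- helper: smul of s-convex combination
    refine ⟨?_, ?_, ?_, ?_⟩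
    · -- convex
      rintro y1 ⟨t1, ht1, x1, hx1, rfl⟩ y2 ⟨t2, ht2, x2, hx2, rfl⟩ a b ha hb hab
      have key : a • t1 • x1 + b • t2 • x2 = (a * t1) • x1 + (b * t2) • x2 := by
        rw [smul_smul, smul_smul]
      rw [key]
      set u := a * t1 with hu
      set v := b * t2 with hv
      have hu0 : 0 ≤ u := mul_nonneg ha ht1
      have hv0 : 0 ≤ v := mul_nonneg hb ht2
      rcases eq_or_lt_of_le (add_nonneg hu0 hv0) with hs | hs
      · have hu' : u = 0 := by linarith
        have hv' : v = 0 := by linarith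
        rw [hu', hv']
        simpa using h0K
      · set s := u + v with hsdef
        set l := u / s with hl
        have hl0 : 0 ≤ l := div_nonneg hu0 hs.le
        have hl1 : l ≤ 1 := by
          rw [hl, div_le_one hs]
          linarith
        set w := l • x1 + (1 - l) • x2 with hw
        have hsum : u • x1 + v • x2 = s • w := by
          rw [hw, smul_add, smul_smul, smul_smul]
          have h1 : s * l = u := by
            rw [hl, mul_comm, div_mul_cancel₀ u hs.ne']
          have h2 : s * (1 - l) = v := by
            rw [mul_sub, mul_one, h1]; linarith
          rw [h1, h2]
        rw [hsum]
        have hrho : rho Φ w ∈ S := hscv x1 hx1 x2 hx2 l ⟨hl0, hl1⟩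
        rcases eq_or_ne (Φ w) 0 with hΦw | hΦw
        · have hw0 : w = 0 := (hzero w).mp hΦw
          rw [hw0]
          simpa using h0K
        · have hΦwpos : 0 < Φ w := (hnn w).lt_of_ne' hΦw
          refine ⟨s * Φ w, by positivity, rho Φ w, hrho, ?_⟩
          rw [rho, smul_smul, mul_assoc, mul_inv_cancel₀ hΦw, mul_one]
    · -- cone
      rintro c hc' y ⟨t, ht, x, hx, rfl⟩
      exact ⟨c * t, mul_nonneg hc' ht, x, hx, by rw [smul_smul]⟩
    · -- closed
      apply IsSeqClosed.isClosed
      intro ys y hys hlim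
      rcases eq_or_ne y 0 with rfl | hy0
      · exact h0K
      · have hΦy : 0 < Φ y := (hnn y).lt_of_ne' (fun h => hy0 ((hzero y).mp h))
        have hΦt : Filter.Tendsto (fun k => Φ (ys k)) Filter.atTop (nhds (Φ y)) :=
          (hc.tendsto y).comp hlim
        have hev : ∀ᶠ k in Filter.atTop, 0 < Φ (ys k) :=
          hΦt.eventually (eventually_gt_nhds hΦy)
        have hrholim : Filter.Tendsto (fun k => rho Φ (ys k)) Filter.atTop
            (nhds (rho Φ y)) := by
          unfold rho
          exact (hΦt.inv₀ hΦy.ne').smul hlim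
        have hevS : ∀ᶠ k in Filter.atTop, rho Φ (ys k) ∈ S := by
          filter_upwards [hev] with k hk
          obtain ⟨t, ht, x, hx, hyk⟩ := hys k
          have hΦyk : Φ (ys k) = t := by rw [hyk]; exact hΦK t ht x hx
          have ht' : t ≠ 0 := by
            intro h; rw [h] at hΦyk; exact hk.ne' hΦyk
          have : rho Φ (ys k) = x := by
            rw [rho, hΦyk, hyk, smul_smul, inv_mul_cancel₀ ht', one_smul]
          rw [this]; exact hx
        have hrhoS : rho Φ y ∈ S := hScl.mem_of_tendsto hrholim hevS
        refine ⟨Φ y, hΦy.le, rho Φ y, hrhoS, ?_⟩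
        rw [rho, smul_smul, mul_inv_cancel₀ hΦy.ne', one_smul]
    · -- pointed
      ext y
      simp only [Set.mem_inter_iff, Set.mem_neg, Set.mem_singleton_iff]
      constructor
      · rintro ⟨⟨t, ht, x, hx, rfl⟩, ⟨s, hs, z, hz, hneg⟩⟩
        rcases eq_or_lt_of_le ht with ht0 | htpos
        · rw [← ht0, zero_smul]
        rcases eq_or_lt_of_le hs with hs0 | hspos
        · rw [← hs0, zero_smul] at hneg
          have : t • x = 0 := by
            have := hneg.symm
            simpa [neg_eq_zero] using this
          exact this
        · exfalso
          -- t • x + s • z = 0, t, s > 0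
          have hsum : t • x + s • z = 0 := by
            linear_combination (norm := module) -hneg
          set l := t / (t + s) with hl
          have hts : 0 < t + s := by linarith
          have hl0 : 0 ≤ l := div_nonneg htpos.le hts.le
          have hl1 : l ≤ 1 := by rw [hl, div_le_one hts]; linarith
          have hwz : l • x + (1 - l) • z = 0 := by
            have h1l : (1 : ℝ) - l = s / (t + s) := by
              rw [hl]; field_simp; ring
            rw [h1l, hl]
            have : (t / (t + s)) • x + (s / (t + s)) • z
                = (t + s)⁻¹ • (t • x + s • z) := by
              rw [smul_add, smul_smul, smul_smul]
              ring_nf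
            rw [this, hsum, smul_zero]
          have := hscv x hx z hz l ⟨hl0, hl1⟩
          rw [hwz] at this
          have h0S : (0 : EuclideanSpace ℝ (Fin n)) ∈ S := by
            rw [rho, hΦ0] at this
            simpa using this
          exact hSne0 0 h0S rfl
      · rintro rfl
        exact ⟨h0K, by simpa using h0K⟩
  · rintro ⟨hconv, hcone, hclosed, hpointed⟩
    have hSeq : S = K ∩ Φ ⁻¹' {1} := by
      ext z
      constructor
      · intro hz
        exact ⟨⟨1, zero_le_one, z, hz, (one_smul ℝ z).symm⟩, hS1 z hz⟩
      · rintro ⟨⟨t, ht, x, hx, rfl⟩, h1⟩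
        have : Φ (t • x) = t := hΦK t ht x hx
        have ht1 : t = 1 := by rw [← this]; exact h1
        rw [ht1, one_smul]
        exact hx
    constructor
    · rw [hSeq]
      exact hclosed.inter (isClosed_singleton.preimage hc)
    · intro x hx y hy l hl
      have hxK : x ∈ K := ⟨1, zero_le_one, x, hx, (one_smul ℝ x).symm⟩
      have hyK : y ∈ K := ⟨1, zero_le_one, y, hy, (one_smul ℝ y).symm⟩
      set w := l • x + (1 - l) • y with hw
      have hwK : w ∈ K := hconv hxK hyK hl.1 (by linarith [hl.2]) (by ring)
      have hwne : w ≠ 0 := by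
        intro hw0
        have hlx : l • x ∈ K := hcone l hl.1 x hxK
        have hly : (1 - l) • y ∈ K := hcone (1 - l) (by linarith [hl.2]) y hyK
        have hneg : -(l • x) = (1 - l) • y := by
          linear_combination (norm := module) -hw0
        have hmem : l • x ∈ K ∩ (-K) := ⟨hlx, by rw [Set.mem_neg, hneg]; exact hly⟩
        rw [hpointed] at hmem
        have hx0 : l = 0 := by
          rcases smul_eq_zero.mp hmem with h | h
          · exact h
          · exact absurd h (hSne0 x hx)
        have hy0 : (1 : ℝ) - l = 0 := by
          have : (1 - l) • y = 0 := by rw [← hneg, hmem, neg_zero]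
          rcases smul_eq_zero.mp this with h | h
          · exact h
          · exact absurd h (hSne0 y hy)
        linarith
      have hΦw : 0 < Φ w := (hnn w).lt_of_ne' (fun h => hwne ((hzero w).mp h))
      have hrhoK : rho Φ w ∈ K := hcone (Φ w)⁻¹ (by positivity) w hwK
      have hrho1 : Φ (rho Φ w) = 1 := by
        rw [rho, hhom _ (by positivity) w, inv_mul_cancel₀ hΦw.ne']
      rw [hSeq]
      exact ⟨hrhoK, hrho1⟩
end

section
/- A nonempty set S ⊆ S_Φ is closed and s-convex if and only if there exists a compact convex set C ⊆ ℝⁿ \ {0} with S = ρ(C). -/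
open Set
open scoped RealInnerProductSpace

lemma isCompact_convexHull_aux {n : ℕ} {s : Set (EuclideanSpace ℝ (Fin n))}
    (hs : IsCompact s) (hsne : s.Nonempty) : IsCompact (convexHull ℝ s) := by
  classical
  obtain ⟨s₀, hs₀⟩ := hsne
  set N := n + 1 with hN
  set f : (Fin N → ℝ) × (Fin N → EuclideanSpace ℝ (Fin n)) → EuclideanSpace ℝ (Fin n) :=
    fun p => ∑ i, p.1 i • p.2 i with hf
  have hfc : Continuous f := by
    apply continuous_finset_sum
    intro i _
    exact ((continuous_apply i).comp continuous_fst).smul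
      ((continuous_apply i).comp continuous_snd)
  set K : Set ((Fin N → ℝ) × (Fin N → EuclideanSpace ℝ (Fin n))) :=
    (stdSimplex ℝ (Fin N)) ×ˢ (Set.univ.pi fun _ => s) with hK
  have hKc : IsCompact K := IsCompact.prod (isCompact_stdSimplex ℝ _) (isCompact_univ_pi fun _ => hs)
  have himg : convexHull ℝ s = f '' K := by
    apply Subset.antisymm
    · intro x hx
      obtain ⟨ι, hfin, z, w, hrange, hai, hwpos, hwsum, hxeq⟩ :=
        eq_pos_convex_span_of_mem_convexHull hx
      have hcard : Fintype.card ι ≤ N := by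
        by_cases hι : Nonempty ι
        · have h1 := hai.finrank_vectorSpan_add_one
          have h2 : Module.finrank ℝ (vectorSpan ℝ (Set.range z)) ≤ n := by
            have := Submodule.finrank_le (vectorSpan ℝ (Set.range z))
            rwa [finrank_euclideanSpace_fin] at this
          omega
        · rw [Fintype.card_eq_zero_iff.mpr (not_nonempty_iff.mp hι)]; omega
      obtain ⟨e⟩ : Nonempty (ι ↪ Fin N) :=
        Function.Embedding.nonempty_of_card_le (by simpa using hcard)
      have hchoose : ∀ i : ι, (⟨i, rfl⟩ : ∃ i', e i' = e i).choose = i := by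
        intro i
        exact e.injective (⟨i, rfl⟩ : ∃ i', e i' = e i).choose_spec
      set w' : Fin N → ℝ := fun j => if h : ∃ i, e i = j then w h.choose else 0 with hw'
      set z' : Fin N → EuclideanSpace ℝ (Fin n) :=
        fun j => if h : ∃ i, e i = j then z h.choose else s₀ with hz'
      have hw'e : ∀ i : ι, w' (e i) = w i := by
        intro i; simp only [hw', dif_pos (⟨i, rfl⟩ : ∃ i', e i' = e i)]; rw [hchoose]
      have hz'e : ∀ i : ι, z' (e i) = z i := by
        intro i; simp only [hz', dif_pos (⟨i, rfl⟩ : ∃ i', e i' = e i)]; rw [hchoose]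
      have hw'0 : ∀ j ∉ Finset.univ.map e, w' j = 0 := by
        intro j hj
        have h : ¬ ∃ i, e i = j := by
          rintro ⟨i, rfl⟩
          exact hj (Finset.mem_map.mpr ⟨i, Finset.mem_univ i, rfl⟩)
        simp only [hw', dif_neg h]
      have hsum1 : ∑ j, w' j = 1 := by
        rw [← Finset.sum_subset (Finset.subset_univ (Finset.univ.map e))
          (fun j _ hj => hw'0 j hj), Finset.sum_map]
        rw [← hwsum]
        exact Finset.sum_congr rfl fun i _ => hw'e i
      have hsum2 : ∑ j, w' j • z' j = x := by
        rw [← Finset.sum_subset (Finset.subset_univ (Finset.univ.map e))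
          (fun j _ hj => by rw [hw'0 j hj, zero_smul]), Finset.sum_map]
        rw [← hxeq]
        exact Finset.sum_congr rfl fun i _ => by show w' (e i) • z' (e i) = w i • z i; rw [hw'e, hz'e]
      refine ⟨(w', z'), ⟨⟨?_, ?_⟩, ?_⟩, ?_⟩
      · intro j
        show 0 ≤ w' j
        by_cases h : ∃ i, e i = j
        · simp only [hw', dif_pos h]; exact (hwpos _).le
        · simp only [hw', dif_neg h]; exact le_refl 0
      · exact hsum1
      · intro j _
        show z' j ∈ s
        by_cases h : ∃ i, e i = j
        · simp only [hz', dif_pos h]; exact hrange ⟨_, rfl⟩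
        · simp only [hz', dif_neg h]; exact hs₀
      · exact hsum2
    · rintro x ⟨⟨w, z⟩, ⟨⟨hw0, hw1⟩, hz⟩, rfl⟩
      exact (convex_convexHull ℝ s).sum_mem (fun i _ => hw0 i) hw1
        (fun i _ => subset_convexHull ℝ s (hz i (mem_univ i)))
  rw [himg]
  exact hKc.image hfc

lemma rho_smul {n : ℕ} (Φ : EuclideanSpace ℝ (Fin n) → ℝ)
    (hhom : ∀ (t : ℝ), 0 ≤ t → ∀ x, Φ (t • x) = t * Φ x)
    {t : ℝ} (ht : 0 < t) (x : EuclideanSpace ℝ (Fin n)) :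
    rho Φ (t • x) = rho Φ x := by
  unfold rho
  rw [hhom t ht.le, mul_inv, smul_smul]
  congr 1
  field_simp

theorem stmt11 {n : ℕ} (hn : 2 ≤ n) (Φ : EuclideanSpace ℝ (Fin n) → ℝ)
    (hc : Continuous Φ) (hnn : ∀ x, 0 ≤ Φ x)
    (hhom : ∀ (t : ℝ), 0 ≤ t → ∀ x, Φ (t • x) = t * Φ x)
    (hzero : ∀ x, Φ x = 0 ↔ x = 0)
    (S : Set (EuclideanSpace ℝ (Fin n))) (hne : S.Nonempty) (hsub : S ⊆ sphereSet Φ) :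
    (IsClosed S ∧ SConvex Φ S) ↔
      ∃ C : Set (EuclideanSpace ℝ (Fin n)),
        IsCompact C ∧ Convex ℝ C ∧ (0 : EuclideanSpace ℝ (Fin n)) ∉ C ∧ S = rho Φ '' C := by
  have hpos : ∀ x : EuclideanSpace ℝ (Fin n), x ≠ 0 → 0 < Φ x := fun x hx =>
    lt_of_le_of_ne (hnn x) (fun h => hx ((hzero x).mp h.symm))
  have hrho_self : ∀ x ∈ S, rho Φ x = x := by
    intro x hx
    have h1 : Φ x = 1 := hsub hx
    simp [rho, h1]
  have h0S : (0 : EuclideanSpace ℝ (Fin n)) ∉ S := by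
    intro h
    have h1 : Φ 0 = 1 := hsub h
    have h2 : Φ 0 = 0 := (hzero 0).mpr rfl
    rw [h2] at h1
    exact one_ne_zero h1.symm
  constructor
  · rintro ⟨hScl, hSconv⟩
    -- the set T of nonzero points whose normalization lies in S
    set T : Set (EuclideanSpace ℝ (Fin n)) := {z | z ≠ 0 ∧ rho Φ z ∈ S} with hT
    have hST : S ⊆ T := by
      intro x hx
      refine ⟨?_, by rw [hrho_self x hx]; exact hx⟩
      rintro rfl; exact h0S hx
    have hTconv : Convex ℝ T := by
      rintro z ⟨hz0, hzS⟩ w ⟨hw0, hwS⟩ a b ha hb hab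
      have hΦz : 0 < Φ z := hpos z hz0
      have hΦw : 0 < Φ w := hpos w hw0
      set t : ℝ := a * Φ z + b * Φ w with htdef
      have htpos : 0 < t := by
        rcases lt_or_eq_of_le ha with ha' | ha'
        · have : 0 < a * Φ z := mul_pos ha' hΦz
          nlinarith [mul_nonneg hb hΦw.le]
        · have hb1 : b = 1 := by linarith
          simp [htdef, ← ha', hb1]
          positivity
      set l : ℝ := a * Φ z / t with hldef
      have hl01 : l ∈ Set.Icc (0 : ℝ) 1 := by
        constructor
        · positivity
        · rw [hldef, div_le_one htpos]
          nlinarith [mul_nonneg hb hΦw.le]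
      have h1l : 1 - l = b * Φ w / t := by
        rw [hldef]
        field_simp
        rw [htdef]
        ring
      have hzrep : (Φ z) • rho Φ z = z := by
        simp [rho, smul_smul, mul_inv_cancel₀ hΦz.ne']
      have hwrep : (Φ w) • rho Φ w = w := by
        simp [rho, smul_smul, mul_inv_cancel₀ hΦw.ne']
      have key : a • z + b • w = t • (l • rho Φ z + (1 - l) • rho Φ w) := by
        rw [h1l, hldef, smul_add, smul_smul, smul_smul]
        rw [mul_div_assoc', mul_comm t, mul_div_assoc, div_self htpos.ne', mul_one,
            mul_div_assoc', mul_comm t (b * Φ w), mul_div_assoc, div_self htpos.ne', mul_one]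
        rw [mul_smul, mul_smul, hzrep, hwrep]
      have hmem : rho Φ (a • z + b • w) ∈ S := by
        rw [key, rho_smul Φ hhom htpos]
        exact hSconv _ hzS _ hwS l hl01
      refine ⟨?_, hmem⟩
      intro h
      rw [h] at hmem
      simp [rho] at hmem
      exact h0S hmem
    have hhull : convexHull ℝ S ⊆ T := convexHull_min hST hTconv
    -- S is bounded, hence compact
    have hx0 : ∃ x0 : EuclideanSpace ℝ (Fin n), ‖x0‖ = 1 := by
      refine ⟨EuclideanSpace.single (⟨0, by omega⟩ : Fin n) (1 : ℝ), ?_⟩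
      simp [EuclideanSpace.norm_single]
    obtain ⟨x0, hx0⟩ := hx0
    have hsph : IsCompact (Metric.sphere (0 : EuclideanSpace ℝ (Fin n)) 1) :=
      isCompact_sphere 0 1
    have hsphne : (Metric.sphere (0 : EuclideanSpace ℝ (Fin n)) 1).Nonempty :=
      ⟨x0, by simp [hx0]⟩
    obtain ⟨m0, hm0mem, hm0min⟩ := hsph.exists_isMinOn hsphne hc.continuousOn
    have hm0pos : 0 < Φ m0 := by
      apply hpos
      intro h
      rw [h] at hm0mem
      simp at hm0mem
    have hSb : S ⊆ Metric.closedBall 0 (Φ m0)⁻¹ := by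
      intro y hy
      have hy1 : Φ y = 1 := hsub hy
      have hy0 : y ≠ 0 := by rintro rfl; exact h0S hy
      have hny : 0 < ‖y‖ := norm_pos_iff.mpr hy0
      have hunit : (‖y‖⁻¹ • y) ∈ Metric.sphere (0 : EuclideanSpace ℝ (Fin n)) 1 := by
        simp [norm_smul, abs_of_pos (inv_pos.mpr hny), inv_mul_cancel₀ hny.ne']
      have hle : Φ m0 ≤ Φ (‖y‖⁻¹ • y) := hm0min hunit
      have heq : Φ (‖y‖⁻¹ • y) = ‖y‖⁻¹ := by
        rw [hhom _ (by positivity), hy1, mul_one]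
      rw [heq] at hle
      simp only [Metric.mem_closedBall, dist_zero_right]
      rw [← inv_inv ‖y‖]
      exact inv_anti₀ hm0pos hle
    have hScomp : IsCompact S :=
      Metric.isCompact_of_isClosed_isBounded hScl
        (Metric.isBounded_closedBall.subset hSb)
    refine ⟨convexHull ℝ S, isCompact_convexHull_aux hScomp hne, convex_convexHull ℝ S, ?_, ?_⟩
    · intro h
      exact (hhull h).1 rfl
    · apply Subset.antisymm
      · intro x hx
        refine ⟨x, subset_convexHull ℝ S hx, hrho_self x hx⟩
      · rintro x ⟨c, hcC, rfl⟩
        exact (hhull hcC).2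
  · rintro ⟨C, hCcomp, hCconv, hC0, rfl⟩
    have hCne0 : ∀ c ∈ C, c ≠ 0 := by rintro c hc rfl; exact hC0 hc
    constructor
    · -- closedness: image of compact under continuous-on map
      have hcont : ContinuousOn (rho Φ) C := by
        refine ContinuousOn.smul (f := fun x => (Φ x)⁻¹) (g := id) ?_ ?_
        · exact (hc.continuousOn.inv₀ fun c hc' => (hpos c (hCne0 c hc')).ne')
        · exact continuousOn_id
      exact (hCcomp.image_of_continuousOn hcont).isClosed
    · intro x hx y hy l hl
      obtain ⟨a, haC, rfl⟩ := hx
      obtain ⟨b, hbC, rfl⟩ := hy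
      have hΦa : 0 < Φ a := hpos a (hCne0 a haC)
      have hΦb : 0 < Φ b := hpos b (hCne0 b hbC)
      set α : ℝ := l * (Φ a)⁻¹ with hα
      set β : ℝ := (1 - l) * (Φ b)⁻¹ with hβ
      have hαnn : 0 ≤ α := mul_nonneg hl.1 (inv_nonneg.mpr hΦa.le)
      have hβnn : 0 ≤ β := mul_nonneg (by linarith [hl.2]) (inv_nonneg.mpr hΦb.le)
      set t : ℝ := α + β with ht
      have htpos : 0 < t := by
        rcases lt_or_eq_of_le hl.1 with hl' | hl'
        · have : 0 < α := mul_pos hl' (inv_pos.mpr hΦa)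
          linarith
        · have : 0 < β := mul_pos (by rw [← hl']; norm_num) (inv_pos.mpr hΦb)
          linarith
      have hcmem : (α / t) • a + (β / t) • b ∈ C := by
        apply hCconv haC hbC (by positivity) (by positivity)
        field_simp
        exact ht.symm
      have key : l • rho Φ a + (1 - l) • rho Φ b = t • ((α / t) • a + (β / t) • b) := by
        simp only [rho, smul_add, smul_smul]
        congr 1
        · congr 1
          rw [hα]; field_simp
        · congr 1
          rw [hβ]; field_simp
      rw [key, rho_smul Φ hhom htpos]
      exact ⟨_, hcmem, rfl⟩
end

section
/- Let S ⊆ S_Φ be nonempty with 0 ∉ conv S (hull-addible), and define sco S := ρ(conv S). Then sco S is s-convex, and sco S is the intersection of all s-convex subsets of S_Φ containing S (the smallest s-convex set containing S). -/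
open Set
open scoped RealInnerProductSpace

theorem stmt12 {n : ℕ} (hn : 2 ≤ n) (Φ : EuclideanSpace ℝ (Fin n) → ℝ)
    (hc : Continuous Φ) (hnn : ∀ x, 0 ≤ Φ x)
    (hhom : ∀ (t : ℝ), 0 ≤ t → ∀ x, Φ (t • x) = t * Φ x)
    (hzero : ∀ x, Φ x = 0 ↔ x = 0)
    (S : Set (EuclideanSpace ℝ (Fin n))) (hne : S.Nonempty) (hsub : S ⊆ sphereSet Φ)
    (hha : (0 : EuclideanSpace ℝ (Fin n)) ∉ convexHull ℝ S) :
    SConvex Φ (rho Φ '' (convexHull ℝ S)) ∧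
      rho Φ '' (convexHull ℝ S) =
        ⋂₀ {C : Set (EuclideanSpace ℝ (Fin n)) | C ⊆ sphereSet Φ ∧ SConvex Φ C ∧ S ⊆ C} := by
  set K := convexHull ℝ S with hKdef
  have hKconv : Convex ℝ K := convex_convexHull ℝ S
  have hpos : ∀ x ∈ K, 0 < Φ x := by
    intro x hx
    rcases (hnn x).lt_or_eq with h | h
    · exact h
    · exact absurd (((hzero x).1 h.symm) ▸ hx) hha
  -- scaling invariance of rho
  have hscale : ∀ (t : ℝ), 0 < t → ∀ x, rho Φ (t • x) = rho Φ x := by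
    intro t ht x
    have h1 : (t * Φ x)⁻¹ * t = (Φ x)⁻¹ := by
      rcases eq_or_ne (Φ x) 0 with h | h
      · simp [h]
      · field_simp
    rw [rho, rho, hhom t ht.le, smul_smul, h1]
  -- the key combination lemma
  have hG : ∀ (α β : ℝ) (a b : EuclideanSpace ℝ (Fin n)), 0 ≤ α → 0 ≤ β → 0 < α + β →
      rho Φ (α • a + β • b) = rho Φ ((α/(α+β)) • a + (1 - α/(α+β)) • b) ∧
        α/(α+β) ∈ Icc (0:ℝ) 1 := by
    intro α β a b hα hβ hs
    have hs' : α + β ≠ 0 := hs.ne'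
    have h1 : (1 : ℝ) - α/(α+β) = β/(α+β) := by field_simp; ring
    constructor
    · rw [h1]
      have h2 : α • a + β • b = (α+β) • ((α/(α+β)) • a + (β/(α+β)) • b) := by
        rw [smul_add, smul_smul, smul_smul]
        congr 2 <;> field_simp
      rw [h2, hscale _ hs]
    · constructor
      · positivity
      · rw [div_le_one hs]; linarith
  have hsph : ∀ x, 0 < Φ x → Φ (rho Φ x) = 1 := by
    intro x hx
    rw [rho, hhom _ (by positivity), inv_mul_cancel₀ hx.ne']
  have hfix : ∀ x, Φ x = 1 → rho Φ x = x := by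
    intro x hx; simp [rho, hx]
  have hSsub : S ⊆ rho Φ '' K := by
    intro x hx
    exact ⟨x, subset_convexHull ℝ S hx, hfix x (hsub hx)⟩
  have himgsub : rho Φ '' K ⊆ sphereSet Φ := by
    rintro _ ⟨x, hx, rfl⟩
    exact hsph x (hpos x hx)
  -- Claim 1 : SConvex
  have hsc : SConvex Φ (rho Φ '' K) := by
    rintro _ ⟨a, ha, rfl⟩ _ ⟨b, hb, rfl⟩ l hl
    have hpa := hpos a ha
    have hpb := hpos b hb
    have hrw : l • rho Φ a + (1 - l) • rho Φ b
        = (l * (Φ a)⁻¹) • a + ((1 - l) * (Φ b)⁻¹) • b := by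
      rw [rho, rho, smul_smul, smul_smul]
    set α := l * (Φ a)⁻¹ with hαdef
    set β := (1 - l) * (Φ b)⁻¹ with hβdef
    have hα : 0 ≤ α := mul_nonneg hl.1 (by positivity)
    have hβ : 0 ≤ β := mul_nonneg (by linarith [hl.2]) (by positivity)
    have hsum : 0 < α + β := by
      rcases hl.1.lt_or_eq with h | h
      · have : 0 < α := mul_pos h (by positivity)
        linarith
      · have : 0 < β := mul_pos (by linarith) (by positivity)
        linarith
    obtain ⟨heq, hc1, hc2⟩ := hG α β a b hα hβ hsum
    rw [hrw, heq]
    exact ⟨_, hKconv ha hb hc1 (by linarith) (by ring), rfl⟩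
  refine ⟨hsc, le_antisymm ?_ (sInter_subset_of_mem ⟨himgsub, hsc, hSsub⟩)⟩
  -- minimality
  rintro _ ⟨x, hx, rfl⟩ C hC
  obtain ⟨hCsub, hCsc, hCS⟩ := hC
  set D : Set (EuclideanSpace ℝ (Fin n)) := {y | y ∈ K ∧ rho Φ y ∈ C} with hDdef
  have hDconv : Convex ℝ D := by
    rintro a ⟨haK, haC⟩ b ⟨hbK, hbC⟩ l m hl hm hlm
    refine ⟨hKconv haK hbK hl hm hlm, ?_⟩
    have hpa := hpos a haK
    have hpb := hpos b hbK
    have hrw : l • a + m • b = (l * Φ a) • rho Φ a + (m * Φ b) • rho Φ b := by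
      rw [rho, rho, smul_smul, smul_smul]
      congr 2 <;> rw [mul_assoc] <;>
        [rw [mul_inv_cancel₀ hpa.ne', mul_one]; rw [mul_inv_cancel₀ hpb.ne', mul_one]]
    set α := l * Φ a with hαdef
    set β := m * Φ b with hβdef
    have hα : 0 ≤ α := mul_nonneg hl hpa.le
    have hβ : 0 ≤ β := mul_nonneg hm hpb.le
    have hsum : 0 < α + β := by
      rcases hl.lt_or_eq with h | h
      · have : 0 < α := mul_pos h hpa
        linarith
      · have : 0 < β := mul_pos (by linarith) hpb
        linarith
    obtain ⟨heq, hIcc⟩ := hG α β (rho Φ a) (rho Φ b) hα hβ hsum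
    rw [hrw, heq]
    exact hCsc _ haC _ hbC _ hIcc
  have hKD : K ⊆ D := convexHull_min (fun s hs =>
    ⟨subset_convexHull ℝ S hs, by rw [hfix s (hsub hs)]; exact hCS hs⟩) hDconv
  exact (hKD hx).2
end

section
/- Let S ⊆ S_Φ be nonempty with 0 ∉ conv S. Then ρ(conv S) = S_Φ ∩ cone S, where cone S = ℝ₊·conv S is the convex conic hull of S. -/
open Set
open scoped RealInnerProductSpace

theorem stmt13 {n : ℕ} (hn : 2 ≤ n) (Φ : EuclideanSpace ℝ (Fin n) → ℝ)
    (hc : Continuous Φ) (hnn : ∀ x, 0 ≤ Φ x)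
    (hhom : ∀ (t : ℝ), 0 ≤ t → ∀ x, Φ (t • x) = t * Φ x)
    (hzero : ∀ x, Φ x = 0 ↔ x = 0)
    (S : Set (EuclideanSpace ℝ (Fin n))) (hne : S.Nonempty) (hsub : S ⊆ sphereSet Φ)
    (hha : (0 : EuclideanSpace ℝ (Fin n)) ∉ convexHull ℝ S) :
    rho Φ '' (convexHull ℝ S) =
      sphereSet Φ ∩ {y | ∃ t : ℝ, 0 ≤ t ∧ ∃ x ∈ convexHull ℝ S, y = t • x} := by
  ext z
  constructor
  · rintro ⟨y, hy, rfl⟩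
    have hy0 : y ≠ 0 := fun h => hha (h ▸ hy)
    have hΦpos : 0 < Φ y :=
      lt_of_le_of_ne (hnn y) (fun h => hy0 ((hzero y).1 h.symm))
    refine ⟨?_, (Φ y)⁻¹, inv_nonneg.2 (hnn y), y, hy, rfl⟩
    show Φ ((Φ y)⁻¹ • y) = 1
    rw [hhom _ (inv_nonneg.2 (hnn y))]
    field_simp
  · rintro ⟨hz, t, ht, x, hx, rfl⟩
    have hx0 : x ≠ 0 := fun h => hha (h ▸ hx)
    have hΦpos : 0 < Φ x :=
      lt_of_le_of_ne (hnn x) (fun h => hx0 ((hzero x).1 h.symm))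
    have hΦz : t * Φ x = 1 := by
      have : Φ (t • x) = 1 := hz
      rwa [hhom t ht] at this
    have ht' : t = (Φ x)⁻¹ := by
      field_simp
      linarith [hΦz]
    exact ⟨x, hx, by rw [rho, ht']⟩
end

section
/- Let ∅ ≠ C ⊆ ℝⁿ \ {0} be compact. If for every affinely independent family x₁,…,x_k ∈ C (k ≥ 1) and all α₁,…,α_k > 0 one has α₁x₁ + … + α_k x_k ≠ 0, then there exists u₀ ∈ ℝⁿ with ⟨x, u₀⟩ > 0 for all x ∈ C. -/
open Set
open scoped RealInnerProductSpace

lemma sum_extend_aux {ι κ M : Type*} [Fintype ι] [Fintype κ] [AddCommMonoid M]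
    (g : ι ↪ κ) (h : κ → M) (hh : ∀ j ∉ Set.range g, h j = 0) :
    ∑ j, h j = ∑ i, h (g i) := by
  classical
  rw [← Finset.sum_image (g := ⇑g) (f := h) (fun a _ b _ hab => g.injective hab)]
  symm
  apply Finset.sum_subset (Finset.subset_univ _)
  intro j _ hj
  apply hh
  rintro ⟨i, hi⟩
  exact hj (Finset.mem_image.mpr ⟨i, Finset.mem_univ i, hi⟩)

lemma isCompact_convexHull_aux_s14 {n : ℕ} {C : Set (EuclideanSpace ℝ (Fin n))}
    (hne : C.Nonempty) (hcpt : IsCompact C) : IsCompact (convexHull ℝ C) := by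
  obtain ⟨c₀, hc₀⟩ := hne
  let E := EuclideanSpace ℝ (Fin n)
  let f : (Fin (n + 1) → ℝ) × (Fin (n + 1) → E) → E := fun p => ∑ i, p.1 i • p.2 i
  have hf : Continuous f := by
    apply continuous_finset_sum
    intro i _
    exact ((continuous_apply i).comp continuous_fst).smul
      ((continuous_apply i).comp continuous_snd)
  have hK : IsCompact ((stdSimplex ℝ (Fin (n + 1))) ×ˢ (Set.univ.pi fun _ : Fin (n + 1) => C)) :=
    (isCompact_stdSimplex (𝕜 := ℝ) (ι := Fin (n + 1))).prod (isCompact_univ_pi fun _ => hcpt)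
  have heq : convexHull ℝ C =
      f '' ((stdSimplex ℝ (Fin (n + 1))) ×ˢ (Set.univ.pi fun _ : Fin (n + 1) => C)) := by
    apply Set.Subset.antisymm
    · intro x hx
      obtain ⟨ι, hι, z, w, hz, haff, hwpos, hwsum, hzsum⟩ :=
        eq_pos_convex_span_of_mem_convexHull hx
      have hcard : Fintype.card ι ≤ n + 1 := by
        have h1 := haff.card_le_finrank_succ
        have h2 := Submodule.finrank_le (vectorSpan ℝ (Set.range z))
        rw [finrank_euclideanSpace_fin] at h2
        omega
      obtain ⟨g⟩ : Nonempty (ι ↪ Fin (n + 1)) := by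
        rw [Function.Embedding.nonempty_iff_card_le]
        simpa using hcard
      classical
      set w' : Fin (n + 1) → ℝ := Function.extend g w (fun _ => (0:ℝ)) with hw'
      set z' : Fin (n + 1) → E := Function.extend g z (fun _ => c₀) with hz'
      have hwg : ∀ i, w' (g i) = w i := fun i => g.injective.extend_apply w _ i
      have hzg : ∀ i, z' (g i) = z i := fun i => g.injective.extend_apply z _ i
      have hwout : ∀ j, j ∉ Set.range g → w' j = 0 := fun j hj =>
        Function.extend_apply' w (fun _ => (0:ℝ)) j (by simpa [Set.mem_range] using hj)
      refine ⟨(w', z'), ⟨⟨?_, ?_⟩, ?_⟩, ?_⟩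
      · intro j
        show 0 ≤ w' j
        by_cases hj : j ∈ Set.range g
        · obtain ⟨i, rfl⟩ := hj
          rw [hwg]; exact (hwpos i).le
        · rw [hwout j hj]
      · show ∑ j, w' j = 1
        rw [sum_extend_aux g w' hwout, ← hwsum]
        exact Finset.sum_congr rfl fun i _ => hwg i
      · intro j _
        show z' j ∈ C
        by_cases hj : j ∈ Set.range g
        · obtain ⟨i, rfl⟩ := hj
          rw [hzg]; exact hz ⟨i, rfl⟩
        · rw [hz', Function.extend_apply' z _ j (by simpa [Set.mem_range] using hj)]
          exact hc₀
      · show (∑ j, w' j • z' j) = x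
        have hout2 : ∀ j, j ∉ Set.range g → w' j • z' j = 0 := by
          intro j hj
          rw [hwout j hj, zero_smul]
        rw [sum_extend_aux g _ hout2, ← hzsum]
        exact Finset.sum_congr rfl fun i _ => by rw [hwg, hzg]
    · rintro x ⟨⟨w, z⟩, ⟨⟨hw0, hw1⟩, hzC⟩, rfl⟩
      have := Finset.centerMass_mem_convexHull (Finset.univ : Finset (Fin (n + 1)))
        (fun i _ => hw0 i) (by rw [hw1]; norm_num) (fun i _ => hzC i (Set.mem_univ i))
      rwa [Finset.centerMass_eq_of_sum_1 _ _ hw1] at this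
  rw [heq]
  exact hK.image hf

theorem stmt14 {n : ℕ} (hn : 2 ≤ n)
    (C : Set (EuclideanSpace ℝ (Fin n))) (hne : C.Nonempty)
    (h0 : (0 : EuclideanSpace ℝ (Fin n)) ∉ C) (hcpt : IsCompact C)
    (hind : ∀ (k : ℕ), 1 ≤ k → ∀ x : Fin k → EuclideanSpace ℝ (Fin n),
      AffineIndependent ℝ x → (∀ i, x i ∈ C) →
      ∀ α : Fin k → ℝ, (∀ i, 0 < α i) → ∑ i, α i • x i ≠ 0) :
    ∃ u₀ : EuclideanSpace ℝ (Fin n), ∀ x ∈ C, 0 < ⟪x, u₀⟫ := by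
  have hhull : (0 : EuclideanSpace ℝ (Fin n)) ∉ convexHull ℝ C := by
    intro h
    obtain ⟨ι, hι, z, w, hz, haff, hwpos, hwsum, hzero⟩ :=
      eq_pos_convex_span_of_mem_convexHull h
    have e := (Fintype.equivFin ι).symm
    have hk : 1 ≤ Fintype.card ι := by
      rcases Nat.eq_zero_or_pos (Fintype.card ι) with h' | h'
      · have : IsEmpty ι := Fintype.card_eq_zero_iff.mp h'
        simp [Finset.univ_eq_empty] at hwsum
      · exact h'
    refine hind (Fintype.card ι) hk (z ∘ e) (haff.comp_embedding e.toEmbedding)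
      (fun i => hz ⟨e i, rfl⟩) (w ∘ e) (fun i => hwpos (e i)) ?_
    rw [← Equiv.sum_comp e (fun i => w i • z i)] at hzero
    exact hzero
  obtain ⟨f, u, hfu, hb⟩ := geometric_hahn_banach_point_closed
    (convex_convexHull ℝ C) (isCompact_convexHull_aux_s14 hne hcpt).isClosed hhull
  have hu : 0 < u := by simpa using hfu
  refine ⟨(InnerProductSpace.toDual ℝ _).symm f, fun x hx => ?_⟩
  have : f x = ⟪(InnerProductSpace.toDual ℝ _).symm f, x⟫ := by
    rw [InnerProductSpace.toDual_symm_apply]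
  rw [real_inner_comm, ← this]
  exact hu.trans (hb x (subset_convexHull ℝ C hx))
end

section
/- (Radon-type theorem) Let S ⊆ S_Φ with card S ≥ n+1 and 0 ∉ conv S. Then there exist disjoint nonempty sets S₁, S₂ with S₁ ∪ S₂ = S such that sco S₁ ∩ sco S₂ ≠ ∅, where sco Sᵢ := ρ(conv Sᵢ). -/
open Set
open scoped RealInnerProductSpace

lemma zero_mem_of_relation {n : ℕ} (S : Set (EuclideanSpace ℝ (Fin n)))
    (t : Finset (EuclideanSpace ℝ (Fin n))) (hts : ↑t ⊆ S)
    (w : EuclideanSpace ℝ (Fin n) → ℝ)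
    (hw0 : ∀ x ∈ t, 0 ≤ w x) (hwpos : 0 < ∑ x ∈ t, w x)
    (hsum : ∑ x ∈ t, w x • x = 0) : (0 : EuclideanSpace ℝ (Fin n)) ∈ convexHull ℝ S := by
  have h := Finset.centerMass_mem_convexHull t hw0 hwpos (fun x hx => hts hx) (z := id)
  rw [Finset.centerMass] at h
  simpa [hsum] using h

lemma rho_eq_of_smul_eq {n : ℕ} (Φ : EuclideanSpace ℝ (Fin n) → ℝ)
    (hhom : ∀ (t : ℝ), 0 ≤ t → ∀ x, Φ (t • x) = t * Φ x)
    {A B : ℝ} (hA : 0 < A) (hB : 0 < B)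
    {p q : EuclideanSpace ℝ (Fin n)} (h : A • p = B • q) : rho Φ p = rho Φ q := by
  set c : ℝ := B⁻¹ * A with hc
  have hcpos : 0 < c := by positivity
  have hq : q = c • p := by
    rw [hc, mul_smul, h, smul_smul, inv_mul_cancel₀ hB.ne', one_smul]
  have hΦ : Φ (c • p) = c * Φ p := hhom c hcpos.le _
  rw [rho, rho, hq, hΦ, smul_smul, mul_inv, mul_assoc, mul_comm (Φ p)⁻¹ c,
    ← mul_assoc, inv_mul_cancel₀ hcpos.ne', one_mul]

theorem stmt17 {n : ℕ} (hn : 2 ≤ n) (Φ : EuclideanSpace ℝ (Fin n) → ℝ)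
    (hc : Continuous Φ) (hnn : ∀ x, 0 ≤ Φ x)
    (hhom : ∀ (t : ℝ), 0 ≤ t → ∀ x, Φ (t • x) = t * Φ x)
    (hzero : ∀ x, Φ x = 0 ↔ x = 0)
    (S : Set (EuclideanSpace ℝ (Fin n))) (hsub : S ⊆ sphereSet Φ)
    (hcard : (n + 1 : ℕ∞) ≤ S.encard)
    (hha : (0 : EuclideanSpace ℝ (Fin n)) ∉ convexHull ℝ S) :
    ∃ S₁ S₂ : Set (EuclideanSpace ℝ (Fin n)),
      S₁.Nonempty ∧ S₂.Nonempty ∧ Disjoint S₁ S₂ ∧ S₁ ∪ S₂ = S ∧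
      (rho Φ '' (convexHull ℝ S₁) ∩ rho Φ '' (convexHull ℝ S₂)).Nonempty := by
  obtain ⟨T, hTS, hTcard⟩ := Set.exists_subset_encard_eq hcard
  have hTfin : T.Finite := Set.finite_of_encard_eq_coe (k := n + 1) (by exact_mod_cast hTcard)
  set t := hTfin.toFinset with ht
  have htS : (↑t : Set _) ⊆ S := by simpa [ht] using hTS
  have htcard : Module.finrank ℝ (EuclideanSpace ℝ (Fin n)) < t.card := by
    rw [finrank_euclideanSpace_fin]
    have : (t.card : ℕ∞) = (n + 1 : ℕ) := by
      rw [← Set.encard_coe_eq_coe_finsetCard, ht, hTfin.coe_toFinset, hTcard]; norm_cast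
    have := by exact_mod_cast this
    omega
  obtain ⟨f, hfsum, x0, hx0t, hx0⟩ := Module.exists_nontrivial_relation_of_finrank_lt_card htcard
  set P := t.filter (fun x => 0 < f x) with hPdef
  set N := t.filter (fun x => ¬ 0 < f x) with hNdef
  have hsplit : ∑ x ∈ P, f x • x + ∑ x ∈ N, f x • x = 0 := by
    rw [Finset.sum_filter_add_sum_filter_not]; exact hfsum
  -- P is nonempty
  have hP : P.Nonempty := by
    by_contra hPe
    rw [Finset.not_nonempty_iff_eq_empty] at hPe
    have hle : ∀ x ∈ t, f x ≤ 0 := by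
      intro x hx
      by_contra hgt
      have hxP : x ∈ P := by
        rw [hPdef, Finset.mem_filter]; exact ⟨hx, not_le.mp hgt⟩
      rw [hPe] at hxP
      exact absurd hxP (Finset.notMem_empty x)
    have hx0neg : f x0 < 0 := lt_of_le_of_ne (hle x0 hx0t) hx0
    refine hha (zero_mem_of_relation S t htS (fun x => -f x)
      (fun x hx => neg_nonneg.2 (hle x hx)) ?_ ?_)
    · exact Finset.sum_pos' (fun x hx => neg_nonneg.2 (hle x hx)) ⟨x0, hx0t, by linarith⟩
    · simp only [neg_smul, Finset.sum_neg_distrib, hfsum, neg_zero]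
  have hApos : 0 < ∑ x ∈ P, f x :=
    Finset.sum_pos (fun x hx => (Finset.mem_filter.mp hx).2) hP
  -- N contains a point with negative coefficient
  have hNle : ∀ x ∈ N, 0 ≤ -f x := by
    intro x hx
    simpa using le_of_not_gt (Finset.mem_filter.mp hx).2
  have hBpos : 0 < ∑ x ∈ N, -f x := by
    rcases (Finset.sum_nonneg hNle).lt_or_eq with h | h
    · exact h
    · exfalso
      have hNzero : ∀ x ∈ N, f x = 0 := by
        intro x hx
        have := (Finset.sum_eq_zero_iff_of_nonneg hNle).mp h.symm x hx
        linarith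
      have hfnn : ∀ x ∈ t, 0 ≤ f x := by
        intro x hx
        by_cases h0 : 0 < f x
        · exact h0.le
        · exact le_of_eq (hNzero x (Finset.mem_filter.mpr ⟨hx, h0⟩)).symm
      have hx0pos : 0 < f x0 := lt_of_le_of_ne (hfnn x0 hx0t) (Ne.symm hx0)
      exact hha (zero_mem_of_relation S t htS f hfnn
        (Finset.sum_pos' hfnn ⟨x0, hx0t, hx0pos⟩) hfsum)
  obtain ⟨xn, hxnN⟩ : N.Nonempty := by
    by_contra hNe
    rw [Finset.not_nonempty_iff_eq_empty] at hNe
    simp [hNe] at hBpos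
  -- center of masses
  set p := P.centerMass f id with hpdef
  set q := N.centerMass (fun x => -f x) id with hqdef
  have hp : p ∈ convexHull ℝ (↑P : Set (EuclideanSpace ℝ (Fin n))) :=
    P.centerMass_mem_convexHull (fun x hx => (Finset.mem_filter.mp hx).2.le) hApos
      (fun x hx => Finset.mem_coe.mpr hx)
  have hNsub : ∀ x ∈ N, x ∈ S \ (↑P : Set (EuclideanSpace ℝ (Fin n))) := by
    intro x hx
    refine ⟨htS (Finset.mem_filter.mp hx).1, fun hxP => ?_⟩
    exact (Finset.mem_filter.mp hx).2 (Finset.mem_filter.mp hxP).2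
  have hq : q ∈ convexHull ℝ (S \ (↑P : Set (EuclideanSpace ℝ (Fin n)))) :=
    N.centerMass_mem_convexHull hNle hBpos hNsub
  have hkey : (∑ x ∈ P, f x) • p = (∑ x ∈ N, -f x) • q := by
    rw [hpdef, hqdef, Finset.centerMass, Finset.centerMass, smul_smul, smul_smul,
      mul_inv_cancel₀ hApos.ne', mul_inv_cancel₀ hBpos.ne', one_smul, one_smul]
    simp only [id_eq, neg_smul]
    rw [Finset.sum_neg_distrib]
    exact eq_neg_of_add_eq_zero_left hsplit
  have hrho : rho Φ p = rho Φ q := rho_eq_of_smul_eq Φ hhom hApos hBpos hkey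
  refine ⟨↑P, S \ ↑P, ⟨_, hP.choose_spec⟩, ⟨xn, hNsub xn hxnN⟩,
    Set.disjoint_sdiff_right, Set.union_diff_cancel ((Finset.coe_subset.mpr (Finset.filter_subset _ t)).trans htS), ?_⟩
  exact ⟨rho Φ p, ⟨p, hp, rfl⟩, ⟨q, hq, hrho.symm⟩⟩
end

section
/- (Helly-type theorem for pointed cones) Let K₁,…,K_m ⊆ ℝⁿ (m ≥ n) be nontrivial pointed convex cones. If ⋂_{j∈J} K_j ≠ {0} for every J ⊆ {1,…,m} with |J| = n, and ⋃_{j∈J} K_j ≠ ℝⁿ for every J ⊆ {1,…,m} with |J| = n+1, then ⋂_{i=1}^m K_i ≠ {0} and ⋃_{i=1}^m K_i ≠ ℝⁿ. -/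
open Set
open scoped RealInnerProductSpace

lemma myAdd {n : ℕ} {C : Set (EuclideanSpace ℝ (Fin n))} (hconv : Convex ℝ C)
    (hcone : ∀ c : ℝ, 0 ≤ c → ∀ y ∈ C, c • y ∈ C)
    {a b : EuclideanSpace ℝ (Fin n)} (ha : a ∈ C) (hb : b ∈ C) : a + b ∈ C := by
  have h := hconv ha hb (by norm_num : (0:ℝ) ≤ 1/2) (by norm_num : (0:ℝ) ≤ 1/2) (by norm_num)
  have h2 := hcone 2 (by norm_num) _ h
  have : (2:ℝ) • ((1/2:ℝ) • a + (1/2:ℝ) • b) = a + b := by module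
  rwa [this] at h2

lemma mySum {n : ℕ} {C : Set (EuclideanSpace ℝ (Fin n))} (hconv : Convex ℝ C)
    (hcone : ∀ c : ℝ, 0 ≤ c → ∀ y ∈ C, c • y ∈ C) (h0 : (0 : EuclideanSpace ℝ (Fin n)) ∈ C)
    {ι : Type} [DecidableEq ι] (s : Finset ι) (μ : ι → ℝ) (x : ι → EuclideanSpace ℝ (Fin n))
    (hμ : ∀ i ∈ s, 0 ≤ μ i) (hx : ∀ i ∈ s, μ i ≠ 0 → x i ∈ C) :
    (∑ i ∈ s, μ i • x i) ∈ C := by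
  induction s using Finset.induction with
  | empty => simpa using h0
  | insert _ _ hni ih =>
    rename_i a t
    rw [Finset.sum_insert hni]
    refine myAdd hconv hcone ?_ (ih (fun i hi => hμ i (Finset.mem_insert_of_mem hi))
      (fun i hi => hx i (Finset.mem_insert_of_mem hi)))
    by_cases h : μ a = 0
    · simpa [h] using h0
    · exact hcone _ (hμ a (Finset.mem_insert_self a t)) _ (hx a (Finset.mem_insert_self a t) h)

lemma lemD {n : ℕ} {ι : Type} [Fintype ι] [DecidableEq ι]
    (C : ι → Set (EuclideanSpace ℝ (Fin n)))
    (hconv : ∀ i, Convex ℝ (C i)) (hcone : ∀ i, ∀ c : ℝ, 0 ≤ c → ∀ y ∈ C i, c • y ∈ C i)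
    (h0 : ∀ i, (0 : EuclideanSpace ℝ (Fin n)) ∈ C i)
    (hptd : ∀ i, C i ∩ (-(C i)) = {0})
    (x : ι → EuclideanSpace ℝ (Fin n)) (hx0 : ∀ i, x i ≠ 0)
    (hxmem : ∀ i j, i ≠ j → x i ∈ C j)
    (g : ι → ℝ) (hsum : ∑ i, g i • x i = 0) (hgne : ∃ i, g i ≠ 0)
    (hle : ∃ j, g j ≤ 0) (hge : ∃ j, 0 ≤ g j) :
    ∃ z, z ≠ 0 ∧ ∀ j, z ∈ C j := by
  have hz2 : ∑ i, max (-g i) 0 • x i = ∑ i, max (g i) 0 • x i := by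
    have h : (∑ i, max (g i) 0 • x i) - ∑ i, max (-g i) 0 • x i = 0 := by
      rw [← Finset.sum_sub_distrib]
      have : ∀ i ∈ Finset.univ, max (g i) 0 • x i - max (-g i) 0 • x i = g i • x i := by
        intro i _
        rw [← sub_smul, max_zero_sub_eq_self]
      rw [Finset.sum_congr rfl this, hsum]
    exact (eq_of_sub_eq_zero h).symm
  by_cases hz : (∑ i, max (g i) 0 • x i) = 0
  · -- degenerate case: contradiction via pointedness
    exfalso
    have contra : ∀ β : ι → ℝ, (∀ i, 0 ≤ β i) → (∑ i, β i • x i) = 0 →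
        ∀ i₀, 0 < β i₀ → ∀ j, β j = 0 → False := by
      intro β hβ hβsum i₀ hi₀ j hjz
      have hij : i₀ ≠ j := by
        intro h; rw [h, hjz] at hi₀; exact lt_irrefl 0 hi₀
      have hrest : (∑ i ∈ Finset.univ.erase i₀, β i • x i) ∈ C j := by
        refine mySum (hconv j) (hcone j) (h0 j) _ _ _ (fun i _ => hβ i) ?_
        intro i _ hβi
        refine hxmem i j (fun h => hβi ?_)
        rw [h]; exact hjz
      have hkey := Finset.add_sum_erase Finset.univ (fun i => β i • x i) (Finset.mem_univ i₀)
      rw [hβsum] at hkey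
      have heq : (∑ i ∈ Finset.univ.erase i₀, β i • x i) = -(β i₀ • x i₀) :=
        eq_neg_of_add_eq_zero_right hkey
      have hnegmem : -x i₀ ∈ C j := by
        have h1 := hcone j (β i₀)⁻¹ (by positivity) _ hrest
        rw [heq, smul_neg, smul_smul, inv_mul_cancel₀ (ne_of_gt hi₀), one_smul] at h1
        exact h1
      have : x i₀ ∈ C j ∩ (-(C j)) := ⟨hxmem i₀ j hij, Set.mem_neg.mpr hnegmem⟩
      rw [hptd j] at this
      exact hx0 i₀ this
    by_cases hpos : ∃ i, 0 < g i
    · obtain ⟨ip, hip⟩ := hpos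
      obtain ⟨j, hj⟩ := hle
      exact contra (fun i => max (g i) 0) (fun i => le_max_right _ _) hz ip
        (lt_max_of_lt_left hip) j (max_eq_right hj)
    · push_neg at hpos
      obtain ⟨i₀, hi₀⟩ := hgne
      have hneg : g i₀ < 0 := lt_of_le_of_ne (hpos i₀) hi₀
      obtain ⟨j, hj⟩ := hge
      refine contra (fun i => max (-g i) 0) (fun i => le_max_right _ _) (hz2.trans hz) i₀
        (lt_max_of_lt_left (by linarith)) j ?_
      exact max_eq_right (by linarith)
  · refine ⟨_, hz, fun j => ?_⟩
    rcases le_or_gt (g j) 0 with h | h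
    · refine mySum (hconv j) (hcone j) (h0 j) _ _ _ (fun i _ => le_max_right _ _) ?_
      intro i _ hi
      refine hxmem i j (fun he => hi ?_)
      rw [he]; exact max_eq_right h
    · rw [← hz2]
      refine mySum (hconv j) (hcone j) (h0 j) _ _ _ (fun i _ => le_max_right _ _) ?_
      intro i _ hi
      refine hxmem i j (fun he => hi ?_)
      rw [he]
      exact max_eq_right (by linarith)

lemma lemKey {n : ℕ} {ι : Type} [Fintype ι] [DecidableEq ι] (hcard : Fintype.card ι = n + 1)
    (C : ι → Set (EuclideanSpace ℝ (Fin n)))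
    (hconv : ∀ i, Convex ℝ (C i)) (hcone : ∀ i, ∀ c : ℝ, 0 ≤ c → ∀ y ∈ C i, c • y ∈ C i)
    (h0 : ∀ i, (0 : EuclideanSpace ℝ (Fin n)) ∈ C i)
    (hptd : ∀ i, C i ∩ (-(C i)) = {0})
    (x : ι → EuclideanSpace ℝ (Fin n)) (hx0 : ∀ i, x i ≠ 0)
    (hxmem : ∀ i j, i ≠ j → x i ∈ C j)
    (p : EuclideanSpace ℝ (Fin n)) (hp : ∀ j, p ∉ C j) :
    ∃ z, z ≠ 0 ∧ ∀ j, z ∈ C j := by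
  have hnonempty : Nonempty ι := Fintype.card_pos_iff.mp (by omega)
  have hdep : ¬ LinearIndependent ℝ x := by
    intro hli
    have h1 := hli.fintype_card_le_finrank
    rw [hcard, finrank_euclideanSpace_fin] at h1
    omega
  obtain ⟨g, hg, i₁, hi₁⟩ := Fintype.not_linearIndependent_iff.mp hdep
  by_cases hmix : (∃ j, g j ≤ 0) ∧ (∃ j, 0 ≤ g j)
  · exact lemD C hconv hcone h0 hptd x hx0 hxmem g hg ⟨i₁, hi₁⟩ hmix.1 hmix.2
  · -- all coefficients strictly one sign
    have hall : (∀ i, 0 < g i) ∨ (∀ i, g i < 0) := by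
      by_contra hc
      push_neg at hc
      obtain ⟨⟨a, ha⟩, ⟨b, hb⟩⟩ := hc
      exact hmix ⟨⟨a, ha⟩, ⟨b, hb⟩⟩
    obtain ⟨β, hβpos, hβsum⟩ : ∃ β : ι → ℝ, (∀ i, 0 < β i) ∧ ∑ i, β i • x i = 0 := by
      rcases hall with h | h
      · exact ⟨g, h, hg⟩
      · refine ⟨fun i => -g i, fun i => neg_pos.2 (h i), ?_⟩
        simp only [neg_smul]
        rw [Finset.sum_neg_distrib, hg, neg_zero]
    set C₀ : Set (EuclideanSpace ℝ (Fin n)) :=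
      {y | ∃ μ : ι → ℝ, (∀ i, 0 ≤ μ i) ∧ ∑ i, μ i • x i = y} with hC₀
    by_cases hpc : p ∈ C₀
    · -- p is a nonnegative combination; shift to kill one coefficient
      exfalso
      obtain ⟨μ, hμ, hμsum⟩ := hpc
      obtain ⟨j, -, hjmin⟩ := Finset.exists_min_image Finset.univ (fun i => μ i / β i)
        ⟨Classical.arbitrary ι, Finset.mem_univ _⟩
      set t : ℝ := μ j / β j with ht
      set ν : ι → ℝ := fun i => μ i - t * β i with hν
      have hν0 : ∀ i, 0 ≤ ν i := by
        intro i
        have h1 := hjmin i (Finset.mem_univ i)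
        rw [div_le_div_iff₀ (hβpos j) (hβpos i)] at h1
        have : t * β i ≤ μ i := by
          rw [ht, div_mul_eq_mul_div, div_le_iff₀ (hβpos j)]
          exact h1
        simp only [hν]; linarith
      have hνj : ν j = 0 := by
        simp only [hν, ht]
        rw [div_mul_cancel₀ _ (ne_of_gt (hβpos j))]
        ring
      have hνsum : ∑ i, ν i • x i = p := by
        have : ∀ i ∈ Finset.univ, ν i • x i = μ i • x i - t • (β i • x i) := by
          intro i _
          simp only [hν, sub_smul, smul_smul]
        rw [Finset.sum_congr rfl this, Finset.sum_sub_distrib, ← Finset.smul_sum, hβsum,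
          smul_zero, sub_zero, hμsum]
      apply hp j
      rw [← hνsum]
      refine mySum (hconv j) (hcone j) (h0 j) _ _ _ (fun i _ => hν0 i) ?_
      intro i _ hi
      refine hxmem i j (fun he => hi ?_)
      rw [he]; exact hνj
    · -- p not in the cone C₀, which contains the span of the x's
      have herase : ∀ i₀ : ι, (∑ i ∈ Finset.univ.erase i₀, β i • x i) = -(β i₀ • x i₀) := by
        intro i₀
        have hkey := Finset.add_sum_erase Finset.univ (fun i => β i • x i) (Finset.mem_univ i₀)
        rw [hβsum] at hkey
        exact eq_neg_of_add_eq_zero_right hkey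
      have hspan : ∀ v ∈ Submodule.span ℝ (Set.range x), v ∈ C₀ := by
        intro v hv
        obtain ⟨c, hc⟩ := (Submodule.mem_span_range_iff_exists_fun ℝ).mp hv
        obtain ⟨s, hs⟩ : ∃ s : ℝ, ∀ i, -c i / β i ≤ s := by
          obtain ⟨M, hM⟩ := Finset.exists_le (Finset.univ.image fun i => -c i / β i)
          exact ⟨M, fun i => hM _ (Finset.mem_image_of_mem _ (Finset.mem_univ i))⟩
        refine ⟨fun i => c i + s * β i, ?_, ?_⟩
        · intro i
          have h1 := hs i
          rw [div_le_iff₀ (hβpos i)] at h1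
          dsimp only
          linarith
        · have : ∀ i ∈ Finset.univ, (c i + s * β i) • x i = c i • x i + s • (β i • x i) := by
            intro i _
            simp only [add_smul, smul_smul]
          rw [Finset.sum_congr rfl this, Finset.sum_add_distrib, ← Finset.smul_sum, hβsum,
            smul_zero, add_zero, hc]
      have hspanne : Submodule.span ℝ (Set.range x) ≠ ⊤ := by
        intro h
        exact hpc (hspan p (h ▸ Submodule.mem_top))
      have hlt : Module.finrank ℝ (Submodule.span ℝ (Set.range x)) < n := by
        have := Submodule.finrank_lt (K := ℝ) (V := EuclideanSpace ℝ (Fin n))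
          hspanne
        rwa [finrank_euclideanSpace_fin] at this
      obtain ⟨j₀⟩ := hnonempty
      set s₀ : Finset ι := Finset.univ.erase j₀ with hs₀
      have hs₀card : s₀.card = n := by
        rw [hs₀, Finset.card_erase_of_mem (Finset.mem_univ j₀), Finset.card_univ, hcard]
        omega
      have hdep' : ¬ LinearIndependent ℝ (fun i : ↥s₀ => x ↑i) := by
        intro hli
        have h1 : Module.finrank ℝ (Submodule.span ℝ (Set.range fun i : ↥s₀ => x ↑i)) = n := by
          rw [finrank_span_eq_card hli, Fintype.card_coe, hs₀card]
        have h2 : Submodule.span ℝ (Set.range fun i : ↥s₀ => x ↑i) ≤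
            Submodule.span ℝ (Set.range x) := by
          apply Submodule.span_mono
          rintro _ ⟨i, rfl⟩
          exact ⟨↑i, rfl⟩
        have h3 := Submodule.finrank_mono h2
        omega
      obtain ⟨g', hg'sum, i', hi'⟩ := Fintype.not_linearIndependent_iff.mp hdep'
      set α : ι → ℝ := fun i => if h : i ∈ s₀ then g' ⟨i, h⟩ else 0 with hα
      have hαsum : ∑ i, α i • x i = 0 := by
        rw [← Finset.sum_subset (Finset.subset_univ s₀)
          (fun i _ hi => by simp [hα, dif_neg hi])]
        rw [← Finset.sum_coe_sort s₀ (fun i => α i • x i)]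
        rw [← hg'sum]
        refine Finset.sum_congr rfl ?_
        intro i _
        simp only [hα, dif_pos i.2]
      have hαj₀ : α j₀ = 0 := by
        simp [hα, hs₀]
      have := lemD C hconv hcone h0 hptd x hx0 hxmem α hαsum
        ⟨↑i', by simp only [hα, dif_pos i'.2]; exact hi'⟩ ⟨j₀, hαj₀.le⟩ ⟨j₀, hαj₀.ge⟩
      exact this

lemma mainLem {n : ℕ} (hn : 2 ≤ n) (k : ℕ) :
    ∀ C : Fin (n + k) → Set (EuclideanSpace ℝ (Fin n)),
    (∀ i, Convex ℝ (C i)) → (∀ i, ∀ c : ℝ, 0 ≤ c → ∀ y ∈ C i, c • y ∈ C i) →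
    (∀ i, (0 : EuclideanSpace ℝ (Fin n)) ∈ C i) → (∀ i, C i ∩ (-(C i)) = {0}) →
    (∀ J : Finset (Fin (n + k)), J.card = n → ∃ z, z ≠ 0 ∧ ∀ j ∈ J, z ∈ C j) →
    (∀ J : Finset (Fin (n + k)), J.card = n + 1 → ∃ p, ∀ j ∈ J, p ∉ C j) →
    ∃ z, z ≠ 0 ∧ ∀ i, z ∈ C i := by
  induction k with
  | zero =>
    intro C _ _ _ _ hInt _
    obtain ⟨z, hz0, hz⟩ := hInt Finset.univ (by simp)
    exact ⟨z, hz0, fun i => hz i (Finset.mem_univ i)⟩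
  | succ k ih =>
    intro C hconv hcone h0 hptd hInt hUn
    set e : Fin (n + k) → Fin (n + k + 1) := Fin.castSucc with he
    set ℓ : Fin (n + k + 1) := Fin.last (n + k) with hℓ
    set i₀ : Fin (n + k) := ⟨0, by omega⟩ with hi₀def
    set C' : Fin (n + k) → Set (EuclideanSpace ℝ (Fin n)) :=
      fun i => if i = i₀ then C (e i) ∩ C ℓ else C (e i) with hC'
    have hC'sub : ∀ i, C' i ⊆ C (e i) := by
      intro i
      by_cases h : i = i₀ <;> simp [hC', h, Set.inter_subset_left]
    have einj : Function.Injective e := Fin.castSucc_injective _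
    have hconv' : ∀ i, Convex ℝ (C' i) := by
      intro i
      by_cases h : i = i₀ <;> simp only [hC', h, if_pos, if_neg, if_true, if_false]
      · exact (hconv _).inter (hconv _)
      · exact hconv _
    have hcone' : ∀ i, ∀ c : ℝ, 0 ≤ c → ∀ y ∈ C' i, c • y ∈ C' i := by
      intro i c hc y hy
      by_cases h : i = i₀ <;> simp only [hC', h, if_true, if_false, if_pos, if_neg] at hy ⊢
      · exact ⟨hcone _ c hc y hy.1, hcone _ c hc y hy.2⟩
      · exact hcone _ c hc y hy
    have h0' : ∀ i, (0 : EuclideanSpace ℝ (Fin n)) ∈ C' i := by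
      intro i
      by_cases h : i = i₀ <;> simp only [hC', h, if_true, if_false, if_pos, if_neg]
      · exact ⟨h0 _, h0 _⟩
      · exact h0 _
    have hptd' : ∀ i, C' i ∩ (-(C' i)) = {0} := by
      intro i
      apply Set.eq_singleton_iff_unique_mem.mpr
      constructor
      · exact ⟨h0' i, by rw [Set.mem_neg, neg_zero]; exact h0' i⟩
      · rintro y ⟨hy1, hy2⟩
        rw [Set.mem_neg] at hy2
        have : y ∈ C (e i) ∩ (-(C (e i))) :=
          ⟨hC'sub i hy1, Set.mem_neg.mpr (hC'sub i hy2)⟩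
        rw [hptd (e i)] at this
        exact this
    have hInt' : ∀ J : Finset (Fin (n + k)), J.card = n → ∃ z, z ≠ 0 ∧ ∀ j ∈ J, z ∈ C' j := by
      intro J hJ
      by_cases hi₀ : i₀ ∈ J
      · set J'' : Finset (Fin (n + k + 1)) := insert ℓ (J.image e) with hJ''def
        have hℓni : ℓ ∉ J.image e := by
          simp only [Finset.mem_image]
          rintro ⟨a, -, ha⟩
          exact absurd ha (Fin.castSucc_lt_last a).ne
        have hJ''card : J''.card = n + 1 := by
          rw [hJ''def, Finset.card_insert_of_notMem hℓni,
            Finset.card_image_of_injective _ einj, hJ]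
        have hxex : ∀ j : ↥J'', ∃ z, z ≠ 0 ∧ ∀ i ∈ J''.erase ↑j, z ∈ C i := by
          intro j
          refine hInt _ ?_
          rw [Finset.card_erase_of_mem j.2, hJ''card]
          omega
        choose x hx0 hxmem using hxex
        obtain ⟨p, hp⟩ := hUn J'' hJ''card
        obtain ⟨z, hz0, hz⟩ := lemKey (n := n) (ι := ↥J'')
          (by rw [Fintype.card_coe, hJ''card]) (fun j : ↥J'' => C j.1)
          (fun j => hconv _) (fun j => hcone _) (fun j => h0 _) (fun j => hptd _)
          x hx0
          (fun i j hij => hxmem i ↑j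
            (Finset.mem_erase.mpr ⟨fun h => hij (Subtype.ext h).symm, j.2⟩))
          p (fun j => hp j.1 j.2)
        refine ⟨z, hz0, fun j hj => ?_⟩
        by_cases h : j = i₀
        · simp only [hC', if_pos h]
          exact ⟨hz ⟨e j, Finset.mem_insert_of_mem (Finset.mem_image_of_mem e hj)⟩,
            hz ⟨ℓ, Finset.mem_insert_self _ _⟩⟩
        · simp only [hC', if_neg h]
          exact hz ⟨e j, Finset.mem_insert_of_mem (Finset.mem_image_of_mem e hj)⟩
      · obtain ⟨z, hz0, hz⟩ := hInt (J.image e)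
          (by rw [Finset.card_image_of_injective _ einj, hJ])
        refine ⟨z, hz0, fun j hj => ?_⟩
        have hne : j ≠ i₀ := fun h => hi₀ (h ▸ hj)
        simp only [hC', if_neg hne]
        exact hz _ (Finset.mem_image_of_mem e hj)
    have hUn' : ∀ J : Finset (Fin (n + k)), J.card = n + 1 → ∃ p, ∀ j ∈ J, p ∉ C' j := by
      intro J hJ
      obtain ⟨p, hp⟩ := hUn (J.image e)
        (by rw [Finset.card_image_of_injective _ einj, hJ])
      exact ⟨p, fun j hj h => hp (e j) (Finset.mem_image_of_mem e hj) (hC'sub j h)⟩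
    obtain ⟨z, hz0, hz⟩ := ih C' hconv' hcone' h0' hptd' hInt' hUn'
    refine ⟨z, hz0, fun i => ?_⟩
    by_cases h : i = ℓ
    · subst h
      have := hz i₀
      simp only [hC', if_pos rfl] at this
      exact this.2
    · have hcast : e (i.castPred h) = i := Fin.castSucc_castPred i h
      have := hC'sub (i.castPred h) (hz (i.castPred h))
      rwa [hcast] at this

theorem stmt18 {n : ℕ} (hn : 2 ≤ n) (m : ℕ) (hm : n ≤ m)
    (K : Fin m → Set (EuclideanSpace ℝ (Fin n)))
    (hKconv : ∀ i, Convex ℝ (K i))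
    (hKcone : ∀ i, ∀ c : ℝ, 0 ≤ c → ∀ y ∈ K i, c • y ∈ K i)
    (hKnt : ∀ i, K i ≠ {0}) (hK0 : ∀ i, (0 : EuclideanSpace ℝ (Fin n)) ∈ K i)
    (hKptd : ∀ i, K i ∩ (-(K i)) = {0})
    (hInt : ∀ J : Finset (Fin m), J.card = n → (⋂ j ∈ J, K j) ≠ {0})
    (hUn : ∀ J : Finset (Fin m), J.card = n + 1 → (⋃ j ∈ J, K j) ≠ Set.univ) :
    (⋂ i, K i) ≠ {0} ∧ (⋃ i, K i) ≠ Set.univ := by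
  obtain ⟨k, rfl⟩ : ∃ k, m = n + k := ⟨m - n, (Nat.add_sub_cancel' hm).symm⟩
  have hInt' : ∀ J : Finset (Fin (n + k)), J.card = n → ∃ z, z ≠ 0 ∧ ∀ j ∈ J, z ∈ K j := by
    intro J hJ
    by_contra hc
    push_neg at hc
    apply hInt J hJ
    apply Set.eq_singleton_iff_unique_mem.mpr
    refine ⟨Set.mem_iInter₂.mpr fun j _ => hK0 j, ?_⟩
    intro z hz
    by_contra hz0
    obtain ⟨j, hj, hjn⟩ := hc z hz0
    exact hjn (Set.mem_iInter₂.mp hz j hj)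
  have hUn' : ∀ J : Finset (Fin (n + k)), J.card = n + 1 → ∃ p, ∀ j ∈ J, p ∉ K j := by
    intro J hJ
    obtain ⟨p, hp⟩ := (Set.ne_univ_iff_exists_notMem _).mp (hUn J hJ)
    exact ⟨p, fun j hj hmem => hp (Set.mem_iUnion₂.mpr ⟨j, hj, hmem⟩)⟩
  obtain ⟨z, hz0, hz⟩ := mainLem hn k K hKconv hKcone hK0 hKptd hInt' hUn'
  constructor
  · intro h
    have hzi : z ∈ ⋂ i, K i := Set.mem_iInter.mpr hz
    rw [h] at hzi
    exact hz0 hzi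
  · intro h
    have hnz : -z ∈ ⋃ i, K i := h ▸ Set.mem_univ _
    obtain ⟨i, hi⟩ := Set.mem_iUnion.mp hnz
    have : z ∈ K i ∩ (-(K i)) := ⟨hz i, Set.mem_neg.mpr hi⟩
    rw [hKptd i] at this
    exact hz0 this
end

section
/- (Helly-type theorem for s-convex sets) Let C₁,…,C_m ⊆ S_Φ (m ≥ n) be nonempty s-convex sets. If ⋂_{j∈J} C_j ≠ ∅ for every J ⊆ {1,…,m} with |J| = n, and ⋃_{j∈J} C_j ≠ S_Φ for every J ⊆ {1,…,m} with |J| = n+1, then ⋂_{i=1}^m C_i ≠ ∅. -/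
open Set
open scoped RealInnerProductSpace

namespace Stmt19Aux

variable {n : ℕ} {Φ : EuclideanSpace ℝ (Fin n) → ℝ}

/-- The open cone over a subset of the sphere. -/
def kone (Φ : EuclideanSpace ℝ (Fin n) → ℝ) (S : Set (EuclideanSpace ℝ (Fin n))) :
    Set (EuclideanSpace ℝ (Fin n)) :=
  {z | ∃ t : ℝ, 0 < t ∧ ∃ x ∈ S, z = t • x}

lemma mem_kone_of_mem {S : Set (EuclideanSpace ℝ (Fin n))} {x : EuclideanSpace ℝ (Fin n)}
    (hx : x ∈ S) : x ∈ kone Φ S :=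
  ⟨1, one_pos, x, hx, (one_smul ℝ x).symm⟩

lemma kone_spec (hhom : ∀ (t : ℝ), 0 ≤ t → ∀ x, Φ (t • x) = t * Φ x)
    {S : Set (EuclideanSpace ℝ (Fin n))} (hS : S ⊆ sphereSet Φ)
    {z : EuclideanSpace ℝ (Fin n)} (hz : z ∈ kone Φ S) : 0 < Φ z ∧ rho Φ z ∈ S := by
  obtain ⟨t, ht, x, hx, rfl⟩ := hz
  have hx1 : Φ x = 1 := hS hx
  have hΦ : Φ (t • x) = t := by rw [hhom t ht.le, hx1, mul_one]
  refine ⟨by rw [hΦ]; exact ht, ?_⟩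
  unfold rho
  rw [hΦ, smul_smul, inv_mul_cancel₀ ht.ne', one_smul]
  exact hx

lemma kone_ne_zero (hhom : ∀ (t : ℝ), 0 ≤ t → ∀ x, Φ (t • x) = t * Φ x)
    (hzero : ∀ x, Φ x = 0 ↔ x = 0)
    {S : Set (EuclideanSpace ℝ (Fin n))} (hS : S ⊆ sphereSet Φ)
    {z : EuclideanSpace ℝ (Fin n)} (hz : z ∈ kone Φ S) : z ≠ 0 := by
  intro h
  have h1 := (kone_spec hhom hS hz).1
  rw [h, (hzero 0).mpr rfl] at h1
  exact lt_irrefl 0 h1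

lemma kone_smul {S : Set (EuclideanSpace ℝ (Fin n))} {z : EuclideanSpace ℝ (Fin n)}
    {c : ℝ} (hc : 0 < c) (hz : z ∈ kone Φ S) : c • z ∈ kone Φ S := by
  obtain ⟨t, ht, x, hx, rfl⟩ := hz
  exact ⟨c * t, mul_pos hc ht, x, hx, smul_smul c t x⟩

lemma kone_add (hhom : ∀ (t : ℝ), 0 ≤ t → ∀ x, Φ (t • x) = t * Φ x)
    (hzero : ∀ x, Φ x = 0 ↔ x = 0) (hnn : ∀ x, 0 ≤ Φ x)
    {S : Set (EuclideanSpace ℝ (Fin n))} (hS : S ⊆ sphereSet Φ) (hconv : SConvex Φ S)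
    {u v : EuclideanSpace ℝ (Fin n)} (hu : u ∈ kone Φ S) (hv : v ∈ kone Φ S) :
    u + v ∈ kone Φ S := by
  obtain ⟨s, hs, x, hx, rfl⟩ := hu
  obtain ⟨t, ht, y, hy, rfl⟩ := hv
  have hst : 0 < s + t := by linarith
  set l : ℝ := s / (s + t) with hl
  have hl0 : 0 ≤ l := by positivity
  have hl1 : l ≤ 1 := by rw [hl, div_le_one hst]; linarith
  set w := l • x + (1 - l) • y with hw
  have hrw : rho Φ w ∈ S := hconv x hx y hy l ⟨hl0, hl1⟩
  have hwne : w ≠ 0 := by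
    intro h
    rw [h] at hrw
    have h0 : rho Φ 0 = 0 := by unfold rho; simp
    rw [h0] at hrw
    have := hS hrw
    have h2 : Φ 0 = 0 := (hzero 0).mpr rfl
    rw [sphereSet] at this
    simp only [Set.mem_setOf_eq] at this
    rw [h2] at this
    norm_num at this
  have hΦw : 0 < Φ w :=
    lt_of_le_of_ne (hnn w) (fun h => hwne ((hzero w).mp h.symm))
  refine ⟨(s + t) * Φ w, by positivity, rho Φ w, hrw, ?_⟩
  have h1 : s • x + t • y = (s + t) • w := by
    rw [hw, smul_add, smul_smul, smul_smul]
    congr 2 <;> rw [hl] <;> field_simp <;> ring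
  rw [h1]
  unfold rho
  rw [smul_smul, mul_assoc, mul_inv_cancel₀ hΦw.ne', mul_one]

lemma sum_mem_kone (hhom : ∀ (t : ℝ), 0 ≤ t → ∀ x, Φ (t • x) = t * Φ x)
    (hzero : ∀ x, Φ x = 0 ↔ x = 0) (hnn : ∀ x, 0 ≤ Φ x)
    {S : Set (EuclideanSpace ℝ (Fin n))} (hS : S ⊆ sphereSet Φ) (hconv : SConvex Φ S)
    {ι : Type*} (s : Finset ι) (c : ι → ℝ) (p : ι → EuclideanSpace ℝ (Fin n))
    (hne : s.Nonempty) (hc : ∀ i ∈ s, 0 < c i) (hp : ∀ i ∈ s, p i ∈ kone Φ S) :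
    ∑ i ∈ s, c i • p i ∈ kone Φ S := by
  classical
  revert hne hc hp
  induction s using Finset.cons_induction with
  | empty => intro hne _ _; exact absurd hne (by simp)
  | cons a s ha ih =>
    intro _ hc hp
    rw [Finset.sum_cons]
    rcases s.eq_empty_or_nonempty with rfl | hs
    · simpa using kone_smul (hc a (Finset.mem_cons_self a _))
        (hp a (Finset.mem_cons_self a _))
    · exact kone_add hhom hzero hnn hS hconv
        (kone_smul (hc a (Finset.mem_cons_self a _)) (hp a (Finset.mem_cons_self a _)))
        (ih hs (fun i hi => hc i (Finset.mem_cons_of_mem hi))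
          (fun i hi => hp i (Finset.mem_cons_of_mem hi)))


open Module in
lemma master (hhom : ∀ (t : ℝ), 0 ≤ t → ∀ x, Φ (t • x) = t * Φ x)
    (hzero : ∀ x, Φ x = 0 ↔ x = 0) (hnn : ∀ x, 0 ≤ Φ x)
    {ι : Type} [Fintype ι]
    (D : ι → Set (EuclideanSpace ℝ (Fin n)))
    (hsub : ∀ i, D i ⊆ sphereSet Φ) (hconv : ∀ i, SConvex Φ (D i))
    (hcard : n + 1 ≤ Fintype.card ι)
    (p : ι → EuclideanSpace ℝ (Fin n))
    (hp : ∀ i j : ι, i ≠ j → p i ∈ D j)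
    (Hcov : Fintype.card ι = n + 1 → ∃ y, Φ y = 1 ∧ ∀ i, y ∉ D i) :
    ∃ z, ∀ i, z ∈ kone Φ (D i) := by
  classical
  set L : (ι → ℝ) →ₗ[ℝ] EuclideanSpace ℝ (Fin n) := Fintype.linearCombination ℝ p with hLdef
  have hLapp : ∀ c : ι → ℝ, L c = ∑ i, c i • p i := fun c => by
    simp [hLdef, Fintype.linearCombination_apply]
  have hpK : ∀ i j : ι, i ≠ j → p i ∈ kone Φ (D j) := fun i j h => mem_kone_of_mem (hp i j h)
  have hrange_n : finrank ℝ (LinearMap.range L) ≤ n := by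
    have h1 := Submodule.finrank_le (LinearMap.range L)
    rwa [finrank_euclideanSpace_fin] at h1
  have hrn : finrank ℝ (LinearMap.range L) + finrank ℝ (LinearMap.ker L) = Fintype.card ι := by
    rw [← Module.finrank_fintype_fun_eq_card ℝ (η := ι)]
    exact LinearMap.finrank_range_add_finrank_ker L
  -- pointedness kills any nonneg dependence avoiding some index
  have PK : ∀ c : ι → ℝ, (∀ i, 0 ≤ c i) → (∑ i, c i • p i = 0) →
      (∃ k, c k = 0) → (∃ i, c i ≠ 0) → False := by
    rintro c hc0 hsum ⟨k, hk⟩ ⟨t0, ht0⟩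
    have hct0 : 0 < c t0 := lt_of_le_of_ne (hc0 t0) (Ne.symm ht0)
    set s : Finset ι := Finset.univ.filter (fun i => 0 < c i) with hsdef
    have hmem : ∀ i, i ∈ s ↔ 0 < c i := fun i => by simp [hsdef]
    have hsum' : ∑ i ∈ s, c i • p i = 0 := by
      rw [← hsum]
      apply Finset.sum_subset (Finset.subset_univ s)
      intro i _ hi
      have : c i = 0 := le_antisymm (not_lt.mp (fun h => hi ((hmem i).mpr h))) (hc0 i)
      simp [this]
    have h0 : (0 : EuclideanSpace ℝ (Fin n)) ∈ kone Φ (D k) := by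
      rw [← hsum']
      refine sum_mem_kone hhom hzero hnn (hsub k) (hconv k) s c p ⟨t0, (hmem t0).mpr hct0⟩
        (fun i hi => (hmem i).mp hi) (fun i hi => ?_)
      have hi' : 0 < c i := (hmem i).mp hi
      have hik : i ≠ k := fun h => by rw [h, hk] at hi'; exact lt_irrefl 0 hi'
      exact hpK i k hik
    exact kone_ne_zero hhom hzero (hsub k) h0 rfl
  -- there is no nontrivial nonnegative dependence at all
  have NoDep : ∀ a : ι → ℝ, (∀ i, 0 ≤ a i) → (∑ i, a i • p i = 0) → ∀ i, a i = 0 := by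
    intro a ha0 hsum
    by_contra hcon
    push_neg at hcon
    obtain ⟨i0, hi0⟩ := hcon
    by_cases hfull : ∀ i, 0 < a i
    swap
    · push_neg at hfull
      obtain ⟨k, hk⟩ := hfull
      exact PK a ha0 hsum ⟨k, le_antisymm hk (ha0 k)⟩ ⟨i0, hi0⟩
    by_cases hspan : Submodule.span ℝ (Set.range p) = ⊤ ∧ Fintype.card ι = n + 1
    · -- full span and minimal cardinality: the missed point y gives a contradiction
      obtain ⟨y, hy1, hy2⟩ := Hcov hspan.2
      have hymem : y ∈ Submodule.span ℝ (Set.range p) := hspan.1 ▸ Submodule.mem_top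
      obtain ⟨c, hc⟩ := (Submodule.mem_span_range_iff_exists_fun ℝ).mp hymem
      have hNe : Nonempty ι := Fintype.card_pos_iff.mp (by omega)
      obtain ⟨k, -, hkmin⟩ := Finset.exists_min_image Finset.univ (fun i => c i / a i)
        Finset.univ_nonempty
      set b : ι → ℝ := fun i => c i - (c k / a k) * a i with hbdef
      have hb0 : ∀ i, 0 ≤ b i := by
        intro i
        have h1 : c k / a k ≤ c i / a i := hkmin i (Finset.mem_univ i)
        have h2 : c k * a i ≤ c i * a k := (div_le_div_iff₀ (hfull k) (hfull i)).mp h1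
        rw [hbdef]
        dsimp only
        rw [sub_nonneg, div_mul_eq_mul_div, div_le_iff₀ (hfull k)]
        linarith
      have hbk : b k = 0 := by
        rw [hbdef]
        dsimp only
        rw [div_mul_cancel₀ _ (hfull k).ne', sub_self]
      have hbsum : ∑ i, b i • p i = y := by
        rw [hbdef]
        simp only [sub_smul, mul_smul]
        rw [Finset.sum_sub_distrib, hc, ← Finset.smul_sum, hsum, smul_zero, sub_zero]
      have hyne : y ≠ 0 := by
        intro h
        rw [h, (hzero 0).mpr rfl] at hy1
        norm_num at hy1
      set s : Finset ι := Finset.univ.filter (fun i => 0 < b i) with hsdef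
      have hmem : ∀ i, i ∈ s ↔ 0 < b i := fun i => by simp [hsdef]
      have hsNe : s.Nonempty := by
        by_contra h
        apply hyne
        rw [← hbsum]
        apply Finset.sum_eq_zero
        intro i _
        have hbi : b i = 0 :=
          le_antisymm (not_lt.mp (fun hlt => h ⟨i, (hmem i).mpr hlt⟩)) (hb0 i)
        simp [hbi]
      have hyk : y ∈ kone Φ (D k) := by
        rw [← hbsum]
        have hsum2 : ∑ i, b i • p i = ∑ i ∈ s, b i • p i := by
          symm
          apply Finset.sum_subset (Finset.subset_univ s)
          intro i _ hi
          have hbi : b i = 0 :=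
            le_antisymm (not_lt.mp (fun h => hi ((hmem i).mpr h))) (hb0 i)
          simp [hbi]
        rw [hsum2]
        refine sum_mem_kone hhom hzero hnn (hsub k) (hconv k) s b p hsNe
          (fun i hi => (hmem i).mp hi) (fun i hi => ?_)
        have hi' : 0 < b i := (hmem i).mp hi
        have hik : i ≠ k := fun h => by rw [h, hbk] at hi'; exact lt_irrefl 0 hi'
        exact hpK i k hik
      have hry : rho Φ y ∈ D k := (kone_spec hhom (hsub k) hyk).2
      rw [rho, hy1] at hry
      simp only [inv_one, one_smul] at hry
      exact hy2 k hry
    · -- kernel has dimension ≥ 2: shrink the support, then apply PK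
      have hker2 : 2 ≤ finrank ℝ (LinearMap.ker L) := by
        by_cases hci : Fintype.card ι = n + 1
        · have hsp : Submodule.span ℝ (Set.range p) ≠ ⊤ := fun h => hspan ⟨h, hci⟩
          have hrle : LinearMap.range L ≤ Submodule.span ℝ (Set.range p) := by
            rintro x ⟨c, rfl⟩
            rw [hLapp]
            exact Submodule.sum_mem _ fun i _ =>
              Submodule.smul_mem _ _ (Submodule.subset_span ⟨i, rfl⟩)
          have h1 : finrank ℝ (LinearMap.range L)
              ≤ finrank ℝ (Submodule.span ℝ (Set.range p)) := Submodule.finrank_mono hrle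
          have h2 : finrank ℝ (Submodule.span ℝ (Set.range p)) < n := by
            have h3 := Submodule.finrank_lt hsp
            rwa [finrank_euclideanSpace_fin] at h3
          omega
        · have : n + 2 ≤ Fintype.card ι := by omega
          omega
      have hane : a ≠ 0 := by
        intro h
        have hNe : Nonempty ι := Fintype.card_pos_iff.mp (by omega)
        obtain ⟨i⟩ := hNe
        exact (hfull i).ne' (congrFun h i)
      obtain ⟨b, hbker, hbspan⟩ : ∃ b ∈ LinearMap.ker L, b ∉ Submodule.span ℝ {a} := by
        by_contra h
        push_neg at h
        have hle : LinearMap.ker L ≤ Submodule.span ℝ {a} := fun x hx => h x hx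
        have := Submodule.finrank_mono hle
        rw [finrank_span_singleton hane] at this
        omega
      obtain ⟨b, hbker, hbspan, i1, hi1⟩ :
          ∃ b, b ∈ LinearMap.ker L ∧ b ∉ Submodule.span ℝ {a} ∧ ∃ i, 0 < b i := by
        by_cases hbpos : ∃ i, 0 < b i
        · exact ⟨b, hbker, hbspan, hbpos⟩
        · push_neg at hbpos
          have hbne : b ≠ 0 := fun h => hbspan (h ▸ Submodule.zero_mem _)
          obtain ⟨i, hi⟩ := Function.ne_iff.mp hbne
          refine ⟨-b, Submodule.neg_mem _ hbker, fun h => hbspan ?_, i, ?_⟩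
          · have := Submodule.neg_mem _ h
            simpa using this
          · simp only [Pi.neg_apply]
            have := lt_of_le_of_ne (hbpos i) hi
            linarith
      have hbsum : ∑ i, b i • p i = 0 := by rw [← hLapp]; exact hbker
      set s : Finset ι := Finset.univ.filter (fun i => 0 < b i) with hsdef
      have hmem : ∀ i, i ∈ s ↔ 0 < b i := fun i => by simp [hsdef]
      obtain ⟨k, hks, hkmin⟩ := Finset.exists_min_image s (fun i => a i / b i)
        ⟨i1, (hmem i1).mpr hi1⟩
      have hbk : 0 < b k := (hmem k).mp hks
      set ε : ℝ := a k / b k with hεdef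
      have hε : 0 < ε := div_pos (hfull k) hbk
      set c : ι → ℝ := fun i => a i - ε * b i with hcdef
      have hcsum : ∑ i, c i • p i = 0 := by
        rw [hcdef]
        simp only [sub_smul, mul_smul]
        rw [Finset.sum_sub_distrib, hsum, ← Finset.smul_sum, hbsum, smul_zero, sub_zero]
      have hc0 : ∀ i, 0 ≤ c i := by
        intro i
        rw [hcdef]
        dsimp only
        rw [sub_nonneg]
        by_cases hbi : 0 < b i
        · have h1 : ε ≤ a i / b i := hkmin i ((hmem i).mpr hbi)
          rw [le_div_iff₀ hbi] at h1
          linarith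
        · push_neg at hbi
          have : ε * b i ≤ 0 := mul_nonpos_of_nonneg_of_nonpos hε.le hbi
          linarith [hfull i]
      have hck : c k = 0 := by
        rw [hcdef, hεdef]
        dsimp only
        field_simp
        ring
      have hcnz : ∃ i, c i ≠ 0 := by
        by_contra h
        push_neg at h
        apply hbspan
        rw [Submodule.mem_span_singleton]
        refine ⟨ε⁻¹, funext fun i => ?_⟩
        have hci := h i
        rw [hcdef] at hci
        dsimp only at hci
        have : a i = ε * b i := by linarith [sub_eq_zero.mp hci]
        simp only [Pi.smul_apply, smul_eq_mul]
        rw [this, ← mul_assoc, inv_mul_cancel₀ hε.ne', one_mul]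
      exact PK c hc0 hcsum ⟨k, hck⟩ hcnz
  -- Radon step
  have hkerne : LinearMap.ker L ≠ ⊥ := by
    intro h
    rw [h, finrank_bot] at hrn
    omega
  obtain ⟨a, haker, hane⟩ := (Submodule.ne_bot_iff _).mp hkerne
  have hasum : ∑ i, a i • p i = 0 := by rw [← hLapp]; exact haker
  set P : Finset ι := Finset.univ.filter (fun i => 0 < a i) with hPdef
  set N : Finset ι := Finset.univ.filter (fun i => a i < 0) with hNdef
  have hPmem : ∀ i, i ∈ P ↔ 0 < a i := fun i => by simp [hPdef]
  have hNmem : ∀ i, i ∈ N ↔ a i < 0 := fun i => by simp [hNdef]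
  have hPne : P.Nonempty := by
    by_contra h
    have hle : ∀ i, a i ≤ 0 := fun i => not_lt.mp (fun hlt => h ⟨i, (hPmem i).mpr hlt⟩)
    have h1 : ∑ i, (-a i) • p i = 0 := by
      simp only [neg_smul, Finset.sum_neg_distrib, hasum, neg_zero]
    have h2 := NoDep (fun i => -a i) (fun i => neg_nonneg.mpr (hle i)) h1
    exact hane (funext fun i => by simpa [neg_eq_zero] using h2 i)
  have hNne : N.Nonempty := by
    by_contra h
    have hle : ∀ i, 0 ≤ a i := fun i => not_lt.mp (fun hlt => h ⟨i, (hNmem i).mpr hlt⟩)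
    have h2 := NoDep a hle hasum
    exact hane (funext h2)
  set z := ∑ i ∈ P, a i • p i with hzdef
  have hzN : z = ∑ i ∈ N, (-a i) • p i := by
    have h1 : ∑ i ∈ Finset.univ.filter (fun i => 0 < a i), a i • p i
        + ∑ i ∈ Finset.univ.filter (fun i => ¬ 0 < a i), a i • p i = 0 := by
      rw [Finset.sum_filter_add_sum_filter_not]
      exact hasum
    have h2 : ∑ i ∈ Finset.univ.filter (fun i => ¬ 0 < a i), a i • p i
        = ∑ i ∈ N, a i • p i := by
      symm
      apply Finset.sum_subset
      · intro i hi
        rw [hNmem] at hi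
        simp only [Finset.mem_filter, Finset.mem_univ, true_and, not_lt]
        exact hi.le
      · intro i hi hni
        simp only [Finset.mem_filter, Finset.mem_univ, true_and, not_lt] at hi
        rw [hNmem] at hni
        push_neg at hni
        have : a i = 0 := le_antisymm hi hni
        simp [this]
    rw [h2] at h1
    calc z = -∑ i ∈ N, a i • p i := eq_neg_of_add_eq_zero_left h1
    _ = ∑ i ∈ N, (-a i) • p i := by
        rw [← Finset.sum_neg_distrib]
        exact Finset.sum_congr rfl fun i _ => (neg_smul _ _).symm
  refine ⟨z, fun k => ?_⟩
  by_cases hk : 0 < a k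
  · rw [hzN]
    refine sum_mem_kone hhom hzero hnn (hsub k) (hconv k) N _ p hNne
      (fun i hi => by rw [hNmem] at hi; linarith) (fun i hi => ?_)
    rw [hNmem] at hi
    exact hpK i k (fun h => by rw [h] at hi; linarith)
  · rw [hzdef]
    refine sum_mem_kone hhom hzero hnn (hsub k) (hconv k) P _ p hPne
      (fun i hi => (hPmem i).mp hi) (fun i hi => ?_)
    rw [hPmem] at hi
    exact hpK i k (fun h => hk (h ▸ hi))

end Stmt19Aux

theorem stmt19 {n : ℕ} (hn : 2 ≤ n) (Φ : EuclideanSpace ℝ (Fin n) → ℝ)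
    (hc : Continuous Φ) (hnn : ∀ x, 0 ≤ Φ x)
    (hhom : ∀ (t : ℝ), 0 ≤ t → ∀ x, Φ (t • x) = t * Φ x)
    (hzero : ∀ x, Φ x = 0 ↔ x = 0)
    (m : ℕ) (hm : n ≤ m) (C : Fin m → Set (EuclideanSpace ℝ (Fin n)))
    (hCne : ∀ i, (C i).Nonempty) (hCsub : ∀ i, C i ⊆ sphereSet Φ)
    (hCconv : ∀ i, SConvex Φ (C i))
    (hInt : ∀ J : Finset (Fin m), J.card = n → (⋂ j ∈ J, C j).Nonempty)
    (hUn : ∀ J : Finset (Fin m), J.card = n + 1 → (⋃ j ∈ J, C j) ≠ sphereSet Φ) :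
    (⋂ i, C i).Nonempty := by
  classical
  have key : ∀ r : ℕ, ∀ J : Finset (Fin m), J.card = n + r → (⋂ j ∈ J, C j).Nonempty := by
    intro r
    induction r with
    | zero =>
      intro J hJ
      exact hInt J (by omega)
    | succ r ih =>
      intro J hJ
      have hchoice : ∀ j : {j : Fin m // j ∈ J}, ∃ q, ∀ k ∈ J.erase j.1, q ∈ C k := by
        rintro ⟨j, hj⟩
        obtain ⟨q, hq⟩ := ih (J.erase j) (by rw [Finset.card_erase_of_mem hj]; omega)
        exact ⟨q, fun k hk => Set.mem_iInter₂.mp hq k hk⟩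
      choose p hp using hchoice
      have hcardι : Fintype.card {j : Fin m // j ∈ J} = n + r + 1 := by
        rw [Fintype.card_coe]; omega
      have hpD : ∀ i j : {j : Fin m // j ∈ J}, i ≠ j → p i ∈ C j.1 := by
        intro i j hij
        exact hp i j.1 (Finset.mem_erase.mpr ⟨fun h => hij (Subtype.ext h.symm), j.2⟩)
      have Hcov : Fintype.card {j : Fin m // j ∈ J} = n + 1 →
          ∃ y, Φ y = 1 ∧ ∀ i : {j : Fin m // j ∈ J}, y ∉ C i.1 := by
        intro hcard
        have hJcard : J.card = n + 1 := by rw [← Fintype.card_coe]; exact hcard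
        have hne := hUn J hJcard
        have hsubU : (⋃ j ∈ J, C j) ⊆ sphereSet Φ := Set.iUnion₂_subset fun j _ => hCsub j
        obtain ⟨y, hy1, hy2⟩ := Set.exists_of_ssubset (hsubU.ssubset_of_ne hne)
        exact ⟨y, hy1, fun i hi => hy2 (Set.mem_biUnion i.2 hi)⟩
      obtain ⟨z, hz⟩ := Stmt19Aux.master hhom hzero hnn
        (fun i : {j : Fin m // j ∈ J} => C i.1)
        (fun i => hCsub i.1) (fun i => hCconv i.1) (by rw [hcardι]; omega) p hpD Hcov
      refine ⟨rho Φ z, Set.mem_iInter₂.mpr fun j hj => ?_⟩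
      exact (Stmt19Aux.kone_spec hhom (hCsub j) (hz ⟨j, hj⟩)).2
  obtain ⟨x, hx⟩ := key (m - n) Finset.univ (by rw [Finset.card_univ, Fintype.card_fin]; omega)
  exact ⟨x, Set.mem_iInter.mpr fun i => Set.mem_iInter₂.mp hx i (Finset.mem_univ i)⟩
end
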